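/- arXiv:2012.01182 — 8 statements merged into one kernel-verified Lean document; each statement's English description precedes it below -/
import Mathlib

section
/- Let N ≥ 2, let W be a Hermitian positive definite N×N complex matrix partitioned in block form W = [[W₁₁, W₁₂],[W₂₁, W₂₂]] with W₁₁ of size (N−1)×(N−1), let x ∈ ℂᴺ be partitioned as x = (x₁, x₂) with x₁ ∈ ℂᴺ⁻¹, x₂ ∈ ℂ, and let e_N denote the last standard basis vector of ℂᴺ. Define s₁ := xᴴ W⁻¹ x and s₂ := |xᴴ W⁻¹ e_N|² / (e_Nᴴ W⁻¹ e_N). Then s₁ − s₂ = x₁ᴴ W₁₁⁻¹ x₁; in particular s₁ − s₂ is a nonnegative real number. -/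
open Matrix
open scoped ComplexOrder

lemma mulVec_one_col {n : ℕ} (B : Matrix (Fin n) (Fin 1) ℂ) (v : Fin 1 → ℂ) :
    B *ᵥ v = (v 0) • (fun i => B i 0) := by
  ext i; simp [Matrix.mulVec, dotProduct, Fin.sum_univ_one, mul_comm]

lemma conjT_mulVec {n : ℕ} (B : Matrix (Fin n) (Fin 1) ℂ) (v : Fin n → ℂ) :
    Bᴴ *ᵥ v = fun _ => star (fun i => B i 0) ⬝ᵥ v := by
  funext j
  fin_cases j
  simp [Matrix.mulVec, dotProduct, Matrix.conjTranspose_apply]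

lemma oneone_mulVec (Sm : Matrix (Fin 1) (Fin 1) ℂ) (v : Fin 1 → ℂ) :
    Sm *ᵥ v = fun _ => Sm 0 0 * v 0 := by
  funext j; fin_cases j; simp [Matrix.mulVec, dotProduct, Fin.sum_univ_one]

lemma inv_oneone (Sm : Matrix (Fin 1) (Fin 1) ℂ) : Sm⁻¹ 0 0 = (Sm 0 0)⁻¹ := by
  simp [Matrix.inv_def, Matrix.adjugate_fin_one, Matrix.det_fin_one]

/-- s₁ − s₂ = x₁ᴴ W₁₁⁻¹ x₁, a nonnegative real number. -/
theorem stmt_3 {n : ℕ} (hn : 1 ≤ n)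
    (W₁₁ : Matrix (Fin n) (Fin n) ℂ) (W₁₂ : Matrix (Fin n) (Fin 1) ℂ)
    (W₂₁ : Matrix (Fin 1) (Fin n) ℂ) (W₂₂ : Matrix (Fin 1) (Fin 1) ℂ)
    (hW : (fromBlocks W₁₁ W₁₂ W₂₁ W₂₂).PosDef)
    (x₁ : Fin n → ℂ) (x₂ : ℂ)
    (s₁ s₂ : ℂ)
    (hs₁ : s₁ = star (Sum.elim x₁ fun _ => x₂) ⬝ᵥ
        ((fromBlocks W₁₁ W₁₂ W₂₁ W₂₂)⁻¹ *ᵥ Sum.elim x₁ fun _ => x₂))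
    (hs₂ : s₂ = ((‖star (Sum.elim x₁ fun _ => x₂) ⬝ᵥ
          ((fromBlocks W₁₁ W₁₂ W₂₁ W₂₂)⁻¹ *ᵥ
            Sum.elim (0 : Fin n → ℂ) (1 : Fin 1 → ℂ))‖ ^ 2 : ℝ) : ℂ) /
        (star (Sum.elim (0 : Fin n → ℂ) (1 : Fin 1 → ℂ)) ⬝ᵥ
          ((fromBlocks W₁₁ W₁₂ W₂₁ W₂₂)⁻¹ *ᵥ
            Sum.elim (0 : Fin n → ℂ) (1 : Fin 1 → ℂ)))) :
    s₁ - s₂ = star x₁ ⬝ᵥ (W₁₁⁻¹ *ᵥ x₁) ∧ ∃ r : ℝ, 0 ≤ r ∧ s₁ - s₂ = (r : ℂ) := by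
  set Wb := fromBlocks W₁₁ W₁₂ W₂₁ W₂₂ with hWb
  have hWH : Wbᴴ = Wb := hW.isHermitian
  have h21 : W₂₁ = W₁₂ᴴ := by
    have := congrArg Matrix.toBlocks₂₁ hWH
    simpa [hWb, Matrix.fromBlocks_conjTranspose] using this.symm
  have h11H : W₁₁ᴴ = W₁₁ := by
    have := congrArg Matrix.toBlocks₁₁ hWH
    simpa [hWb, Matrix.fromBlocks_conjTranspose] using this
  have h11 : W₁₁.PosDef := by
    refine posDef_iff_dotProduct_mulVec.mpr ⟨h11H, fun y hy => ?_⟩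
    have h0 : Sum.elim y (0 : Fin 1 → ℂ) ≠ 0 := by
      intro h
      exact hy (funext fun i => congrFun h (Sum.inl i))
    have := hW.dotProduct_mulVec_pos h0
    simpa [hWb, Function.star_sumElim, fromBlocks_mulVec,
      sumElim_dotProduct_sumElim] using this
  set A := W₁₁⁻¹ with hAdef
  have hA : Aᴴ = A := (h11.inv).isHermitian
  set V := A * W₁₂ with hVdef
  have hVH : W₂₁ * A = Vᴴ := by
    rw [hVdef, conjTranspose_mul, hA, h21]
  set S := W₂₂ - W₂₁ * A * W₁₂ with hSdef
  letI iW : Invertible Wb := hW.isUnit.invertible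
  letI i11 : Invertible W₁₁ := h11.isUnit.invertible
  letI iS' : Invertible (W₂₂ - W₂₁ * ⅟W₁₁ * W₁₂) :=
    invertibleOfFromBlocks₁₁Invertible W₁₁ W₁₂ W₂₁ W₂₂
  have hSS : W₂₂ - W₂₁ * ⅟W₁₁ * W₁₂ = S := by
    rw [invOf_eq_nonsing_inv, hSdef]
  letI iS : Invertible S := hSS ▸ iS'
  have hMblock : Wb⁻¹ =
      fromBlocks (A + A * W₁₂ * S⁻¹ * (W₂₁ * A)) (-(A * W₁₂ * S⁻¹))
        (-(S⁻¹ * (W₂₁ * A))) S⁻¹ := by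
    rw [hWb, ← invOf_eq_nonsing_inv, invOf_fromBlocks₁₁_eq]
    simp only [invOf_eq_nonsing_inv, hSdef, hAdef, Matrix.mul_assoc]
  set w : Fin n → ℂ := fun i => V i 0 with hw
  set σc : ℂ := S⁻¹ 0 0 with hσc
  set a : ℂ := star x₁ ⬝ᵥ (A *ᵥ x₁) with ha
  set b : ℂ := star w ⬝ᵥ x₁ with hb
  set c : ℂ := star x₁ ⬝ᵥ w with hc
  -- column entries
  have hcol : ∀ i, (A * W₁₂ * S⁻¹) i 0 = σc * w i := by
    intro i
    rw [Matrix.mul_apply, Fin.sum_univ_one, mul_comm]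
  -- positivity of σc
  have hne : (Sum.elim (0 : Fin n → ℂ) (1 : Fin 1 → ℂ)) ≠ 0 := by
    intro h
    have := congrFun h (Sum.inr 0)
    simp at this
  have hσ : star (Sum.elim (0 : Fin n → ℂ) (1 : Fin 1 → ℂ)) ⬝ᵥ
      (Wb⁻¹ *ᵥ Sum.elim (0 : Fin n → ℂ) (1 : Fin 1 → ℂ)) = σc := by
    rw [hMblock, fromBlocks_mulVec]
    simp [Function.star_sumElim, sumElim_dotProduct_sumElim, oneone_mulVec,
      Fin.sum_univ_one, dotProduct, hσc, inv_oneone]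
  have hσpos : 0 < σc := by
    rw [← hσ]
    exact (hW.inv).dotProduct_mulVec_pos hne
  have him : σc.im = 0 := by
    have := Complex.lt_def.mp hσpos
    simpa using this.2.symm
  have hσreal : (starRingEnd ℂ) σc = σc := Complex.conj_eq_iff_im.mpr him
  have hσne : σc ≠ 0 := hσpos.ne'
  -- mulVec component computations
  have hQ1 : (A * W₁₂ * S⁻¹) *ᵥ (1 : Fin 1 → ℂ) = σc • w := by
    rw [mulVec_one_col]
    funext i
    simp only [Pi.smul_apply, Pi.one_apply, one_smul, smul_eq_mul]
    rw [hcol i, one_mul]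
  have hQx : (A * W₁₂ * S⁻¹) *ᵥ (fun _ => x₂) = (x₂ * σc) • w := by
    rw [mulVec_one_col]
    funext i
    simp only [Pi.smul_apply, smul_eq_mul]
    rw [hcol i]
    ring
  have hS1 : (S⁻¹ : Matrix (Fin 1) (Fin 1) ℂ) *ᵥ (1 : Fin 1 → ℂ) = fun _ => σc := by
    rw [oneone_mulVec]; simp [hσc]
  have hSx : (S⁻¹ : Matrix (Fin 1) (Fin 1) ℂ) *ᵥ (fun _ => x₂) = fun _ => σc * x₂ := by
    rw [oneone_mulVec]
  have hVHx : (W₂₁ * A) *ᵥ x₁ = fun _ => b := by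
    rw [hVH, conjT_mulVec]
  have hR : (S⁻¹ * (W₂₁ * A)) *ᵥ x₁ = fun _ => σc * b := by
    rw [← Matrix.mulVec_mulVec, hVHx, oneone_mulVec]
  have hP : (A * W₁₂ * S⁻¹ * (W₂₁ * A)) *ᵥ x₁ = (b * σc) • w := by
    rw [← Matrix.mulVec_mulVec, hVHx, mulVec_one_col]
    funext i
    simp only [Pi.smul_apply, smul_eq_mul]
    rw [hcol i]
    ring
  -- scalar values of s₁ and the cross term
  have hdot_smul : ∀ (r : ℂ), star x₁ ⬝ᵥ (r • w) = r * c := by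
    intro r
    rw [dotProduct_smul, smul_eq_mul, hc]
  have hdot1 : ∀ (u : Fin 1 → ℂ), star (fun _ : Fin 1 => x₂) ⬝ᵥ u =
      (starRingEnd ℂ) x₂ * u 0 := by
    intro u
    simp [dotProduct, Fin.sum_univ_one]
  have hs₁' : s₁ = a + b * σc * c - x₂ * σc * c
      + ((starRingEnd ℂ) x₂ * (σc * x₂) - (starRingEnd ℂ) x₂ * (σc * b)) := by
    rw [hs₁, hMblock, fromBlocks_mulVec, Sum.elim_comp_inl, Sum.elim_comp_inr,
      Function.star_sumElim, sumElim_dotProduct_sumElim, Matrix.add_mulVec,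
      Matrix.neg_mulVec, Matrix.neg_mulVec, hP, hQx, hR, hSx]
    simp only [dotProduct_add, dotProduct_neg, hdot_smul, hdot1, Pi.add_apply,
      Pi.neg_apply, ← ha]
    ring
  have hz : star (Sum.elim x₁ fun _ => x₂) ⬝ᵥ
      (Wb⁻¹ *ᵥ Sum.elim (0 : Fin n → ℂ) (1 : Fin 1 → ℂ)) =
      σc * ((starRingEnd ℂ) x₂ - c) := by
    rw [hMblock, fromBlocks_mulVec, Sum.elim_comp_inl, Sum.elim_comp_inr,
      Function.star_sumElim, sumElim_dotProduct_sumElim, Matrix.mulVec_zero,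
      Matrix.mulVec_zero, zero_add, zero_add, Matrix.neg_mulVec, hQ1, hS1]
    simp only [dotProduct_neg, hdot_smul, hdot1]
    ring
  -- conj c = b
  have hcb : (starRingEnd ℂ) c = b := by
    rw [hc, hb]
    simp [dotProduct, map_sum, mul_comm]
  have hbc : (starRingEnd ℂ) b = c := by
    rw [← hcb, Complex.conj_conj]
  -- s₂
  have hs₂' : s₂ = σc * ((starRingEnd ℂ) x₂ - c) * (σc * (x₂ - b)) / σc := by
    rw [hs₂]
    rw [show ((‖star (Sum.elim x₁ fun _ => x₂) ⬝ᵥ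
          (Wb⁻¹ *ᵥ Sum.elim (0 : Fin n → ℂ) (1 : Fin 1 → ℂ))‖ ^ 2 : ℝ) : ℂ) =
        (star (Sum.elim x₁ fun _ => x₂) ⬝ᵥ
          (Wb⁻¹ *ᵥ Sum.elim (0 : Fin n → ℂ) (1 : Fin 1 → ℂ))) *
        (starRingEnd ℂ) (star (Sum.elim x₁ fun _ => x₂) ⬝ᵥ
          (Wb⁻¹ *ᵥ Sum.elim (0 : Fin n → ℂ) (1 : Fin 1 → ℂ))) by
      rw [Complex.mul_conj, Complex.normSq_eq_norm_sq]]
    rw [hσ, hz]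
    congr 1
    rw [_root_.map_mul, hσreal, _root_.map_sub, hcb, Complex.conj_conj]
  have key : s₁ - s₂ = a := by
    rw [hs₁', hs₂']
    field_simp
    ring
  refine ⟨key, a.re, ?_, ?_⟩
  · have h0a : (0 : ℂ) ≤ a := (h11.inv).posSemidef.dotProduct_mulVec_nonneg x₁
    exact (Complex.le_def.mp h0a).1
  · rw [key]
    have h0a : (0 : ℂ) ≤ a := (h11.inv).posSemidef.dotProduct_mulVec_nonneg x₁
    exact (Complex.ext (by simp) (by simp [← (Complex.le_def.mp h0a).2])).symm
end

section
/- Let N ≥ 2, let v ∈ ℂᴺ with ‖v‖ = 1, and let V⊥ be an N×(N−1) complex matrix with V⊥ᴴV⊥ = I_{N−1} and V⊥ᴴv = 0. Let Σ_t be a Hermitian positive definite N×N complex matrix, let G_t be an invertible N×N matrix with Σ_t = G_t G_tᴴ, and let F_t be an invertible (N−1)×(N−1) matrix with F_t F_tᴴ = V⊥ᴴ Σ_t V⊥. Let γ_t := vᴴ Σ_t⁻¹ v (a positive real number) and define the N×N matrix Q whose first N−1 columns are G_tᴴ V⊥ F_t⁻ᴴ and whose last column is γ_t^{−1/2} G_t⁻¹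 v. Then Q is unitary and Qᴴ G_t⁻¹ v = γ_t^{1/2} e_N, where e_N is the last standard basis vector of ℂᴺ. -/
open Matrix
open scoped ComplexOrder

/-- the rotation matrix Q is unitary and maps the whitened signature
G_t⁻¹v to γ_t^{1/2} e_N. -/
theorem stmt_5 {n : ℕ} (hn : 1 ≤ n)
    (v : (Fin n ⊕ Fin 1) → ℂ) (hv : star v ⬝ᵥ v = 1)
    (Vperp : Matrix (Fin n ⊕ Fin 1) (Fin n) ℂ)
    (hVperp : Vperpᴴ * Vperp = 1) (hVperpv : Vperpᴴ *ᵥ v = 0)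
    (Sigt : Matrix (Fin n ⊕ Fin 1) (Fin n ⊕ Fin 1) ℂ) (hSigt : Sigt.PosDef)
    (Gt : Matrix (Fin n ⊕ Fin 1) (Fin n ⊕ Fin 1) ℂ) (hGt : IsUnit Gt.det)
    (hGtSigt : Sigt = Gt * Gtᴴ)
    (Ft : Matrix (Fin n) (Fin n) ℂ) (hFt : IsUnit Ft.det)
    (hFtFt : Ft * Ftᴴ = Vperpᴴ * Sigt * Vperp)
    (γt : ℝ) (hγtpos : 0 < γt)
    (hγt : (γt : ℂ) = star v ⬝ᵥ (Sigt⁻¹ *ᵥ v))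
    (Q : Matrix (Fin n ⊕ Fin 1) (Fin n ⊕ Fin 1) ℂ)
    (hQ : Q = fromCols (Gtᴴ * Vperp * (Ft⁻¹)ᴴ)
        (replicateCol (Fin 1) (((Real.sqrt γt : ℝ) : ℂ)⁻¹ • (Gt⁻¹ *ᵥ v)))) :
    Qᴴ * Q = 1 ∧
    Qᴴ *ᵥ (Gt⁻¹ *ᵥ v) =
      ((Real.sqrt γt : ℝ) : ℂ) • Sum.elim (0 : Fin n → ℂ) (1 : Fin 1 → ℂ) := by
  set A : Matrix (Fin n ⊕ Fin 1) (Fin n) ℂ := Gtᴴ * Vperp * (Ft⁻¹)ᴴ with hA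
  set w : (Fin n ⊕ Fin 1) → ℂ := Gt⁻¹ *ᵥ v with hw
  set c : ℂ := ((Real.sqrt γt : ℝ) : ℂ)⁻¹ with hc
  have hFtH : IsUnit Ftᴴ.det := by
    rw [det_conjTranspose]; exact hFt.star
  have hAH : Aᴴ = Ft⁻¹ * (Vperpᴴ * Gt) := by
    simp [hA, conjTranspose_mul, conjTranspose_nonsing_inv, Matrix.mul_assoc]
  -- Sigma inverse
  have hSinv : Sigt⁻¹ = (Gtᴴ)⁻¹ * Gt⁻¹ := by
    rw [hGtSigt, Matrix.mul_inv_rev]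
  -- Aᴴ A = 1
  have hAA : Aᴴ * A = 1 := by
    have h1 : Aᴴ * A = Ft⁻¹ * (Vperpᴴ * Sigt * Vperp) * (Ftᴴ)⁻¹ := by
      rw [hAH, hA, hGtSigt, conjTranspose_nonsing_inv]
      simp only [Matrix.mul_assoc]
    rw [h1, ← hFtFt]
    calc Ft⁻¹ * (Ft * Ftᴴ) * (Ftᴴ)⁻¹
        = (Ft⁻¹ * Ft) * (Ftᴴ * (Ftᴴ)⁻¹) := by
          rw [Matrix.mul_assoc, Matrix.mul_assoc, Matrix.mul_assoc]
      _ = 1 := by rw [Matrix.nonsing_inv_mul _ hFt, Matrix.mul_nonsing_inv _ hFtH]; simp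
  -- Aᴴ w = 0
  have hAw : Aᴴ *ᵥ w = 0 := by
    have h2 : Ft⁻¹ * (Vperpᴴ * Gt) * Gt⁻¹ = Ft⁻¹ * Vperpᴴ := by
      rw [Matrix.mul_assoc Ft⁻¹, Matrix.mul_assoc Vperpᴴ, Matrix.mul_nonsing_inv _ hGt,
        Matrix.mul_one]
    rw [hw, Matrix.mulVec_mulVec, hAH, h2, ← Matrix.mulVec_mulVec, hVperpv]
    simp
  -- star w ⬝ w = γt
  have hww : star w ⬝ᵥ w = (γt : ℂ) := by
    rw [hγt, hw, star_mulVec, Matrix.dotProduct_mulVec, Matrix.dotProduct_mulVec,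
      Matrix.vecMul_vecMul, hSinv, conjTranspose_nonsing_inv]
  have hγ0 : (γt : ℂ) ≠ 0 := by exact_mod_cast hγtpos.ne'
  have hsqrt0 : ((Real.sqrt γt : ℝ) : ℂ) ≠ 0 := by
    simpa [Complex.ofReal_eq_zero] using (Real.sqrt_pos.2 hγtpos).ne'
  have hsq' : ((Real.sqrt γt : ℝ) : ℂ) * ((Real.sqrt γt : ℝ) : ℂ) = (γt : ℂ) := by
    rw [← Complex.ofReal_mul, Real.mul_self_sqrt hγtpos.le]
  have hcs : star c = c := by
    rw [hc, ← Complex.ofReal_inv, Complex.star_def, Complex.conj_ofReal]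
  have hsq : c * (c * (γt : ℂ)) = 1 := by
    rw [hc]
    field_simp
    rw [sq]; exact hsq'.symm
  have hAw' : Aᴴ *ᵥ (c • w) = 0 := by rw [Matrix.mulVec_smul, hAw, smul_zero]
  have h0 : Aᴴ * replicateCol (Fin 1) (c • w) = 0 := by
    rw [← replicateCol_mulVec, hAw']
    ext i j
    simp
  have hBB : star (c • w) ⬝ᵥ (c • w) = 1 := by
    rw [star_smul, smul_dotProduct, dotProduct_smul, hww, hcs, smul_eq_mul, smul_eq_mul, hsq]
  have hBw : star (c • w) ⬝ᵥ w = ((Real.sqrt γt : ℝ) : ℂ) := by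
    rw [star_smul, smul_dotProduct, hww, hcs, smul_eq_mul, hc,
      inv_mul_eq_iff_eq_mul₀ hsqrt0, hsq']
  -- Q conj transpose
  have hQH : Qᴴ = fromRows Aᴴ (replicateCol (Fin 1) (c • w))ᴴ := by
    rw [hQ, conjTranspose_fromCols_eq_fromRows_conjTranspose]
  have h0' : (replicateCol (Fin 1) (c • w))ᴴ * A = 0 := by
    have := congrArg conjTranspose h0
    simpa [conjTranspose_mul] using this
  have hBBm : (replicateCol (Fin 1) (c • w))ᴴ * replicateCol (Fin 1) (c • w) = 1 := by
    ext i j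
    have he : ((replicateCol (Fin 1) (c • w))ᴴ * replicateCol (Fin 1) (c • w)) i j
        = star (c • w) ⬝ᵥ (c • w) := by
      simp [mul_apply, conjTranspose_apply, replicateCol_apply, dotProduct]
    rw [he, hBB, Subsingleton.elim i j, one_apply_eq]
  constructor
  · rw [hQH, hQ, fromRows_mul_fromCols, hAA, h0, h0', hBBm, fromBlocks_one]
  · rw [hQH, fromRows_mulVec]
    have h1 : (replicateCol (Fin 1) (c • w))ᴴ *ᵥ w = fun _ => ((Real.sqrt γt : ℝ) : ℂ) := by
      ext i
      have he : ((replicateCol (Fin 1) (c • w))ᴴ *ᵥ w) i = star (c • w) ⬝ᵥ w := by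
        simp [mulVec, conjTranspose_apply, replicateCol_apply, dotProduct]
      rw [he, hBw]
    rw [hAw, h1]
    ext (i | i) <;> simp
end

section
/- Let N ≥ 2, let v ∈ ℂᴺ with ‖v‖ = 1, let V⊥ be an N×(N−1) complex matrix with V⊥ᴴV⊥ = I_{N−1} and V⊥ᴴv = 0, let Σ and Σ_t be Hermitian positive definite N×N complex matrices, let G_t be invertible with Σ_t = G_t G_tᴴ, let F_t be invertible with F_t F_tᴴ = V⊥ᴴ Σ_t V⊥, and let Q be the unitary matrix whose first N−1 columns are G_tᴴ V⊥ F_t⁻ᴴ and whose last column is (vᴴΣ_t⁻¹v)^{−1/2} G_t⁻¹ v. Define Ω := Qᴴ G_t⁻¹ Σ G_t⁻ᴴ Q and let Ω₂₁ denote its bottom-left 1×(N−1) block (last row, first N−1 columns). Then Ω₂₁ = 0 if and only if vᴴ Σ_t⁻¹ Σ V⊥ = 0 (the zero 1×(N−1) row). -/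
open Matrix
open scoped ComplexOrder

/-- the bottom-left block Ω₂₁ of Ω = Qᴴ G_t⁻¹ Σ G_t⁻ᴴ Q vanishes
iff vᴴΣ_t⁻¹ΣV⊥ = 0. -/
theorem stmt_6 {n : ℕ} (hn : 1 ≤ n)
    (v : (Fin n ⊕ Fin 1) → ℂ) (hv : star v ⬝ᵥ v = 1)
    (Vperp : Matrix (Fin n ⊕ Fin 1) (Fin n) ℂ)
    (hVperp : Vperpᴴ * Vperp = 1) (hVperpv : Vperpᴴ *ᵥ v = 0)
    (Sig Sigt : Matrix (Fin n ⊕ Fin 1) (Fin n ⊕ Fin 1) ℂ)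
    (hSig : Sig.PosDef) (hSigt : Sigt.PosDef)
    (Gt : Matrix (Fin n ⊕ Fin 1) (Fin n ⊕ Fin 1) ℂ) (hGt : IsUnit Gt.det)
    (hGtSigt : Sigt = Gt * Gtᴴ)
    (Ft : Matrix (Fin n) (Fin n) ℂ) (hFt : IsUnit Ft.det)
    (hFtFt : Ft * Ftᴴ = Vperpᴴ * Sigt * Vperp)
    (Q : Matrix (Fin n ⊕ Fin 1) (Fin n ⊕ Fin 1) ℂ)
    (hQ : Q = fromCols (Gtᴴ * Vperp * (Ft⁻¹)ᴴ)
        (replicateCol (Fin 1) (((Real.sqrt ((star v ⬝ᵥ (Sigt⁻¹ *ᵥ v)).re) : ℝ) : ℂ)⁻¹ •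
          (Gt⁻¹ *ᵥ v))))
    (Ω : Matrix (Fin n ⊕ Fin 1) (Fin n ⊕ Fin 1) ℂ)
    (hΩ : Ω = Qᴴ * (Gt⁻¹ * Sig * (Gt⁻¹)ᴴ) * Q) :
    Ω.toBlocks₂₁ = 0 ↔ star v ᵥ* (Sigt⁻¹ * Sig * Vperp) = 0 := by
  classical
  subst hQ hΩ
  set α : ℝ := Real.sqrt ((star v ⬝ᵥ (Sigt⁻¹ *ᵥ v)).re) with hαdef
  have hv0 : v ≠ 0 := by
    rintro rfl; simp at hv
  have hpos : 0 < (star v ⬝ᵥ (Sigt⁻¹ *ᵥ v)).re := by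
    simpa using hSigt.inv.re_dotProduct_pos hv0
  have hαne : ((α : ℂ))⁻¹ ≠ 0 := by
    simp [hαdef, Complex.ofReal_ne_zero, (Real.sqrt_pos.mpr hpos).ne']
  have hGtH : IsUnit Gtᴴ.det := by rw [det_conjTranspose]; exact hGt.star
  have hFtH : IsUnit Ftᴴ.det := by rw [det_conjTranspose]; exact hFt.star
  have hGinv : (Gt⁻¹)ᴴ * Gtᴴ = 1 := by
    rw [conjTranspose_nonsing_inv, nonsing_inv_mul _ hGtH]
  have hFinv : (Ft⁻¹)ᴴ * Ftᴴ = 1 := by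
    rw [conjTranspose_nonsing_inv, nonsing_inv_mul _ hFtH]
  have hSigtinv : Sigt⁻¹ = (Gt⁻¹)ᴴ * Gt⁻¹ := by
    rw [hGtSigt, Matrix.mul_inv_rev, conjTranspose_nonsing_inv]
  set w : (Fin n ⊕ Fin 1) → ℂ := ((α : ℂ))⁻¹ • (Gt⁻¹ *ᵥ v) with hw
  set A : Matrix (Fin n ⊕ Fin 1) (Fin n) ℂ := Gtᴴ * Vperp * (Ft⁻¹)ᴴ with hA
  set M : Matrix (Fin n ⊕ Fin 1) (Fin n ⊕ Fin 1) ℂ := Gt⁻¹ * Sig * (Gt⁻¹)ᴴ with hM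
  have cancel : ∀ X : Matrix (Fin n ⊕ Fin 1) (Fin n) ℂ,
      (Gt⁻¹)ᴴ * (Gtᴴ * X) = X := fun X => by
    rw [← Matrix.mul_assoc, hGinv, Matrix.one_mul]
  have key : (Gt⁻¹)ᴴ * (M * A) = Sigt⁻¹ * Sig * Vperp * (Ft⁻¹)ᴴ := by
    rw [hM, hA, hSigtinv]
    simp only [Matrix.mul_assoc, cancel]
  have hΩ21 : ((fromCols A (replicateCol (Fin 1) w))ᴴ * M *
        (fromCols A (replicateCol (Fin 1) w))).toBlocks₂₁
      = Matrix.replicateRow (Fin 1)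
        (((α : ℂ))⁻¹ • ((star v ᵥ* (Sigt⁻¹ * Sig * Vperp)) ᵥ* (Ft⁻¹)ᴴ)) := by
    rw [conjTranspose_fromCols_eq_fromRows_conjTranspose, fromRows_mul,
      fromRows_mul_fromCols, toBlocks_fromBlocks₂₁, conjTranspose_replicateCol,
      ← Matrix.replicateRow_vecMul, ← Matrix.replicateRow_vecMul, vecMul_vecMul]
    rw [hw, star_smul, smul_vecMul, star_mulVec, vecMul_vecMul, key, vecMul_vecMul]
    congr 2
    simp
  rw [hΩ21]
  constructor
  · intro h
    have hz : ((α : ℂ))⁻¹ • ((star v ᵥ* (Sigt⁻¹ * Sig * Vperp)) ᵥ* (Ft⁻¹)ᴴ) = 0 := by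
      funext j
      have := congrFun (congrFun h 0) j
      simpa using this
    have hy : (star v ᵥ* (Sigt⁻¹ * Sig * Vperp)) ᵥ* (Ft⁻¹)ᴴ = 0 := by
      rcases smul_eq_zero.mp hz with h' | h'
      · exact absurd h' hαne
      · exact h'
    have h2 : (star v ᵥ* (Sigt⁻¹ * Sig * Vperp)) ᵥ* ((Ft⁻¹)ᴴ * Ftᴴ) = 0 := by
      rw [← vecMul_vecMul, hy, Matrix.zero_vecMul]
    rwa [hFinv, vecMul_one] at h2
  · intro h
    rw [h]
    simp
end

section
/- Let N ≥ 2, let v ∈ ℂᴺ be nonzero, let V⊥ be an N×(N−1) complex matrix with V⊥ᴴV⊥ = I_{N−1} and V⊥ᴴv = 0, and let Σ and Σ_t be Hermitian positive definite N×N complex matrices. Then the following are equivalent: (i) vᴴ Σ_t⁻¹ Σ V⊥ = 0 (the zero 1×(N−1) row); (ii) there exists λ ∈ ℂ such that Σ Σ_t⁻¹ v = λ v; (iii) there exists λ ∈ ℂ such that Σ_t⁻¹ v = λ Σ⁻¹ v. -/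
open Matrix
open scoped ComplexOrder

/-- Completeness: if `Vperpᴴ w = 0` then `w` is a multiple of `v`. -/
lemma aux_complete {n : ℕ}
    (v : (Fin n ⊕ Fin 1) → ℂ) (hv : v ≠ 0)
    (Vperp : Matrix (Fin n ⊕ Fin 1) (Fin n) ℂ)
    (hVperp : Vperpᴴ * Vperp = 1) (hVperpv : Vperpᴴ *ᵥ v = 0)
    (w : (Fin n ⊕ Fin 1) → ℂ) (hw : Vperpᴴ *ᵥ w = 0) :
    ∃ l : ℂ, w = l • v := by
  classical
  -- normalization constant
  set c : ℝ := ∑ i, Complex.normSq (v i) with hc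
  have hcpos : 0 < c := by
    obtain ⟨i, hi⟩ := Function.ne_iff.mp hv
    refine Finset.sum_pos' (fun j _ => Complex.normSq_nonneg _) ⟨i, Finset.mem_univ _, ?_⟩
    exact Complex.normSq_pos.mpr (by simpa using hi)
  set s : ℝ := Real.sqrt c with hs
  have hspos : 0 < s := Real.sqrt_pos.mpr hcpos
  have hsne : (s : ℂ) ≠ 0 := by exact_mod_cast hspos.ne'
  have hss : (s : ℂ) * (s : ℂ) = (c : ℂ) := by
    rw [← Complex.ofReal_mul, Real.mul_self_sqrt hcpos.le]
  set u : (Fin n ⊕ Fin 1) → ℂ := (s : ℂ)⁻¹ • v with hu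
  have hvv : star v ⬝ᵥ v = (c : ℂ) := by
    simp only [dotProduct, Pi.star_apply, hc]
    push_cast
    refine Finset.sum_congr rfl fun i _ => ?_
    rw [RCLike.star_def, mul_comm, Complex.mul_conj]
  have huu : star u ⬝ᵥ u = 1 := by
    rw [hu, star_smul, smul_dotProduct, dotProduct_smul, hvv]
    simp only [star_inv₀, RCLike.star_def, Complex.conj_ofReal, smul_eq_mul]
    field_simp [hsne]
    rw [sq, hss]
  have hVu : Vperpᴴ *ᵥ u = 0 := by
    rw [hu, Matrix.mulVec_smul, hVperpv, smul_zero]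
  -- the unitary matrix [Vperp | u]
  have hb1 : Vperpᴴ * Matrix.replicateCol (Fin 1) u = 0 := by
    ext i j
    simpa [Matrix.mul_apply, Matrix.replicateCol, Matrix.mulVec, dotProduct]
      using congrFun hVu i
  have hb2 : Matrix.replicateRow (Fin 1) (star u) * Vperp = 0 := by
    have h0 : star u ᵥ* Vperp = 0 := by
      have := congrArg star hVu
      rwa [Matrix.star_mulVec, Matrix.conjTranspose_conjTranspose, star_zero] at this
    ext i j
    simpa [Matrix.mul_apply, Matrix.replicateRow, Matrix.vecMul, dotProduct]
      using congrFun h0 j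
  have hb3 : Matrix.replicateRow (Fin 1) (star u) * Matrix.replicateCol (Fin 1) u = 1 := by
    ext i j
    simp [Matrix.replicateRow_mul_replicateCol_apply, huu, Matrix.one_apply, Subsingleton.elim i j]
  have hRQ : Matrix.fromRows Vperpᴴ (Matrix.replicateRow (Fin 1) (star u)) *
      Matrix.fromCols Vperp (Matrix.replicateCol (Fin 1) u) = 1 := by
    rw [Matrix.fromRows_mul_fromCols, hVperp, hb1, hb2, hb3, Matrix.fromBlocks_one]
  have hQR : Matrix.fromCols Vperp (Matrix.replicateCol (Fin 1) u) *
      Matrix.fromRows Vperpᴴ (Matrix.replicateRow (Fin 1) (star u)) = 1 :=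
    (Matrix.fromCols_mul_fromRows_eq_one_comm (Equiv.refl _) _ _ _ _).mpr hRQ
  rw [Matrix.fromCols_mul_fromRows] at hQR
  have hw1 : w = (Matrix.replicateCol (Fin 1) u * Matrix.replicateRow (Fin 1) (star u)) *ᵥ w := by
    conv_lhs => rw [← Matrix.one_mulVec w, ← hQR]
    rw [Matrix.add_mulVec, ← Matrix.mulVec_mulVec, hw, Matrix.mulVec_zero, zero_add]
  have hw2 : w = (star u ⬝ᵥ w) • u := by
    funext i
    have := congrFun hw1 i
    rw [this]
    simp only [Matrix.mulVec, Matrix.mul_apply, Matrix.replicateCol, Matrix.replicateRow, dotProduct,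
      Matrix.of_apply, Pi.smul_apply, Pi.star_apply, Fintype.sum_sum_type, Fin.sum_univ_one,
      Finset.sum_singleton, smul_eq_mul]
    rw [add_mul, Finset.sum_mul]
    congr 1
    · exact Finset.sum_congr rfl fun j _ => by ring
    · ring
  refine ⟨(star u ⬝ᵥ w) * (s : ℂ)⁻¹, ?_⟩
  conv_lhs => rw [hw2]
  rw [hu, smul_smul]

/-- equivalent characterizations of the generalized eigenrelation (GER). -/
theorem stmt_7 {n : ℕ} (hn : 1 ≤ n)
    (v : (Fin n ⊕ Fin 1) → ℂ) (hv : v ≠ 0)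
    (Vperp : Matrix (Fin n ⊕ Fin 1) (Fin n) ℂ)
    (hVperp : Vperpᴴ * Vperp = 1) (hVperpv : Vperpᴴ *ᵥ v = 0)
    (Sig Sigt : Matrix (Fin n ⊕ Fin 1) (Fin n ⊕ Fin 1) ℂ)
    (hSig : Sig.PosDef) (hSigt : Sigt.PosDef) :
    ((star v ᵥ* (Sigt⁻¹ * Sig * Vperp) = 0) ↔
      ∃ l : ℂ, (Sig * Sigt⁻¹) *ᵥ v = l • v) ∧
    ((∃ l : ℂ, (Sig * Sigt⁻¹) *ᵥ v = l • v) ↔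
      ∃ l : ℂ, Sigt⁻¹ *ᵥ v = l • (Sig⁻¹ *ᵥ v)) := by
  have hS1 : Sigᴴ = Sig := hSig.1
  have hSt1 : (Sigt⁻¹)ᴴ = Sigt⁻¹ := hSigt.1.inv
  have hSigDet : IsUnit Sig.det := (Matrix.isUnit_iff_isUnit_det _).1 hSig.isUnit
  have hSinv : Sig⁻¹ * Sig = 1 := Matrix.nonsing_inv_mul _ hSigDet
  have hSinv' : Sig * Sig⁻¹ = 1 := Matrix.mul_nonsing_inv _ hSigDet
  have hM : (Sigt⁻¹ * Sig * Vperp)ᴴ = Vperpᴴ * (Sig * Sigt⁻¹) := by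
    rw [Matrix.conjTranspose_mul, Matrix.conjTranspose_mul, hS1, hSt1]
  constructor
  · -- (i) ↔ (ii)
    have hiff : (star v ᵥ* (Sigt⁻¹ * Sig * Vperp) = 0) ↔
        Vperpᴴ *ᵥ ((Sig * Sigt⁻¹) *ᵥ v) = 0 := by
      rw [Matrix.mulVec_mulVec, ← hM]
      constructor
      · intro h
        have := congrArg star h
        rwa [Matrix.star_vecMul, star_star, star_zero] at this
      · intro h
        have := congrArg star h
        rwa [Matrix.star_mulVec, Matrix.conjTranspose_conjTranspose, star_zero] at this
    rw [hiff]
    constructor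
    · intro h
      exact aux_complete v hv Vperp hVperp hVperpv _ h
    · rintro ⟨l, hl⟩
      rw [hl, Matrix.mulVec_smul, hVperpv, smul_zero]
  · -- (ii) ↔ (iii)
    constructor
    · rintro ⟨l, hl⟩
      refine ⟨l, ?_⟩
      have h2 : Sig⁻¹ *ᵥ ((Sig * Sigt⁻¹) *ᵥ v) = Sig⁻¹ *ᵥ (l • v) := by rw [hl]
      rwa [Matrix.mulVec_mulVec, ← Matrix.mul_assoc, hSinv, Matrix.one_mul,
        Matrix.mulVec_smul] at h2
    · rintro ⟨l, hl⟩
      refine ⟨l, ?_⟩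
      rw [← Matrix.mulVec_mulVec, hl, Matrix.mulVec_smul, Matrix.mulVec_mulVec, hSinv',
        Matrix.one_mulVec]
end

section
/- Let N ≥ 2, let v ∈ ℂᴺ with ‖v‖ = 1, let V⊥ be an N×(N−1) complex matrix with V⊥ᴴV⊥ = I_{N−1} and V⊥ᴴv = 0, let Σ and Σ_t be Hermitian positive definite N×N complex matrices, let G_t be invertible with Σ_t = G_t G_tᴴ, let F_t be invertible with F_t F_tᴴ = V⊥ᴴ Σ_t V⊥, and let Q be the unitary matrix whose first N−1 columns are G_tᴴ V⊥ F_t⁻ᴴ and whose last column is (vᴴΣ_t⁻¹v)^{−1/2} G_t⁻¹ v. Define Ω := Qᴴ G_t⁻¹ Σ G_t⁻ᴴ Q, partitioned into blocks Ω₁₁ ((N−1)×(N−1)), Ω₁₂, Ω₂₁, Ω₂₂ (1×1). Then Ω₁₁ is invertible and the scalar Schur complement satisfies Ω₂.₁ := Ω₂₂ − Ω₂₁ Ω₁₁⁻¹ Ω₁₂ = (vᴴ Σ_t⁻¹ v)/(vᴴ Σ⁻¹ v). -/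
open Matrix
open scoped ComplexOrder

private lemma posDef_conj {m : Type*} [Fintype m] [DecidableEq m] {A : Matrix m m ℂ}
    (hA : A.PosDef) (B : Matrix m m ℂ) (hB : IsUnit B.det) : (Bᴴ * A * B).PosDef := by
  refine PosDef.of_dotProduct_mulVec_pos (Matrix.isHermitian_conjTranspose_mul_mul B hA.1) fun x hx => ?_
  have hinj : Function.Injective B.mulVec := Matrix.mulVec_injective_iff_isUnit.mpr
    ((Matrix.isUnit_iff_isUnit_det B).mpr hB)
  have hx' : B *ᵥ x ≠ 0 := fun h => hx (hinj (by simpa using h))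
  simpa only [star_mulVec, dotProduct_mulVec, vecMul_vecMul] using hA.dotProduct_mulVec_pos hx'

private lemma conj_blocks {k m : Type*} [Fintype k] [Fintype m]
    (N : Matrix m m ℂ) (U : Matrix m k ℂ) (w : Matrix m (Fin 1) ℂ) :
    (fromCols U w)ᴴ * N * fromCols U w =
      fromBlocks (Uᴴ * (N * U)) (Uᴴ * (N * w)) (wᴴ * (N * U)) (wᴴ * (N * w)) := by
  rw [conjTranspose_fromCols_eq_fromRows_conjTranspose, Matrix.mul_assoc,
    mul_fromCols, fromRows_mul_fromCols]

/-- Ω₁₁ is invertible and the scalar Schur complement of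
Ω = Qᴴ G_t⁻¹ Σ G_t⁻ᴴ Q equals (vᴴΣ_t⁻¹v)/(vᴴΣ⁻¹v). -/
theorem stmt_9 {n : ℕ} (hn : 1 ≤ n)
    (v : (Fin n ⊕ Fin 1) → ℂ) (hv : star v ⬝ᵥ v = 1)
    (Vperp : Matrix (Fin n ⊕ Fin 1) (Fin n) ℂ)
    (hVperp : Vperpᴴ * Vperp = 1) (hVperpv : Vperpᴴ *ᵥ v = 0)
    (Sig Sigt : Matrix (Fin n ⊕ Fin 1) (Fin n ⊕ Fin 1) ℂ)
    (hSig : Sig.PosDef) (hSigt : Sigt.PosDef)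
    (Gt : Matrix (Fin n ⊕ Fin 1) (Fin n ⊕ Fin 1) ℂ) (hGt : IsUnit Gt.det)
    (hGtSigt : Sigt = Gt * Gtᴴ)
    (Ft : Matrix (Fin n) (Fin n) ℂ) (hFt : IsUnit Ft.det)
    (hFtFt : Ft * Ftᴴ = Vperpᴴ * Sigt * Vperp)
    (Q : Matrix (Fin n ⊕ Fin 1) (Fin n ⊕ Fin 1) ℂ)
    (hQ : Q = fromCols (Gtᴴ * Vperp * (Ft⁻¹)ᴴ)
        (replicateCol (Fin 1) (((Real.sqrt ((star v ⬝ᵥ (Sigt⁻¹ *ᵥ v)).re) : ℝ) : ℂ)⁻¹ •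
          (Gt⁻¹ *ᵥ v))))
    (Ω : Matrix (Fin n ⊕ Fin 1) (Fin n ⊕ Fin 1) ℂ)
    (hΩ : Ω = Qᴴ * (Gt⁻¹ * Sig * (Gt⁻¹)ᴴ) * Q) :
    IsUnit Ω.toBlocks₁₁.det ∧
    (Ω.toBlocks₂₂ - Ω.toBlocks₂₁ * Ω.toBlocks₁₁⁻¹ * Ω.toBlocks₁₂) 0 0 =
      (star v ⬝ᵥ (Sigt⁻¹ *ᵥ v)) / (star v ⬝ᵥ (Sig⁻¹ *ᵥ v)) := by
  classical
  have hv0 : v ≠ 0 := by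
    intro h; rw [h] at hv; simp at hv
  set α : ℂ := star v ⬝ᵥ (Sigt⁻¹ *ᵥ v) with hαdef
  set β : ℂ := star v ⬝ᵥ (Sig⁻¹ *ᵥ v) with hβdef
  have hαpos : 0 < α := hSigt.inv.dotProduct_mulVec_pos hv0
  have hβpos : 0 < β := hSig.inv.dotProduct_mulVec_pos hv0
  have hα0 : α ≠ 0 := hαpos.ne'
  have hβ0 : β ≠ 0 := hβpos.ne'
  have hαre_pos : 0 < α.re := (Complex.lt_def.mp hαpos).1
  have hαim : α.im = 0 := ((Complex.lt_def.mp hαpos).2).symm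
  have hαre : ((α.re : ℝ) : ℂ) = α := by
    apply Complex.ext <;> simp [hαim]
  set c : ℝ := Real.sqrt α.re with hcdef
  have hc_pos : 0 < c := Real.sqrt_pos.mpr hαre_pos
  have hcC0 : (c : ℂ) ≠ 0 := by exact_mod_cast hc_pos.ne'
  have hc2 : (c : ℂ) * c = α := by
    rw [← Complex.ofReal_mul, Real.mul_self_sqrt hαre_pos.le, hαre]
  -- determinants
  have hGtH : IsUnit Gtᴴ.det := by rw [Matrix.det_conjTranspose]; exact hGt.star
  have hFtH : IsUnit Ftᴴ.det := by rw [Matrix.det_conjTranspose]; exact hFt.star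
  have hSigdet : IsUnit Sig.det := hSig.det_pos.ne'.isUnit
  have e1 : (Gt⁻¹)ᴴ * Gtᴴ = 1 := by
    rw [← conjTranspose_mul, Matrix.mul_nonsing_inv _ hGt, conjTranspose_one]
  have hSigtinv : Sigt⁻¹ = (Gt⁻¹)ᴴ * Gt⁻¹ := by
    rw [hGtSigt, Matrix.mul_inv_rev, ← Matrix.conjTranspose_nonsing_inv]
  set y : (Fin n ⊕ Fin 1) → ℂ := Gt⁻¹ *ᵥ v with hydef
  set x : (Fin n ⊕ Fin 1) → ℂ := ((c : ℝ) : ℂ)⁻¹ • y with hxdef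
  set U : Matrix (Fin n ⊕ Fin 1) (Fin n) ℂ := Gtᴴ * Vperp * (Ft⁻¹)ᴴ with hUdef
  set w : Matrix (Fin n ⊕ Fin 1) (Fin 1) ℂ := replicateCol (Fin 1) x with hwdef
  have hQfc : Q = fromCols U w := hQ
  have hGty : Gt *ᵥ y = v := by
    rw [hydef, Matrix.mulVec_mulVec, Matrix.mul_nonsing_inv _ hGt, Matrix.one_mulVec]
  have hyy : star y ⬝ᵥ y = α := by
    calc star y ⬝ᵥ y = (star v ᵥ* (Gt⁻¹)ᴴ) ⬝ᵥ (Gt⁻¹ *ᵥ v) := by rw [hydef, star_mulVec]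
      _ = star v ⬝ᵥ ((Gt⁻¹)ᴴ *ᵥ (Gt⁻¹ *ᵥ v)) := by
          simp [Matrix.dotProduct_mulVec, Matrix.vecMul_vecMul, Matrix.mulVec_mulVec]
      _ = α := by rw [Matrix.mulVec_mulVec, ← hSigtinv]
  have hUH : Uᴴ = Ft⁻¹ * (Vperpᴴ * Gt) := by
    rw [hUdef]
    simp [conjTranspose_mul, Matrix.mul_assoc]
  have hUU : Uᴴ * U = 1 := by
    calc Uᴴ * U = Ft⁻¹ * ((Vperpᴴ * Sigt * Vperp) * (Ft⁻¹)ᴴ) := by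
          rw [hUH, hUdef, hGtSigt]; simp only [Matrix.mul_assoc]
      _ = Ft⁻¹ * ((Ft * Ftᴴ) * (Ft⁻¹)ᴴ) := by rw [hFtFt]
      _ = 1 := by
          rw [Matrix.conjTranspose_nonsing_inv]
          simp only [Matrix.mul_assoc]
          rw [Matrix.mul_nonsing_inv _ hFtH, Matrix.mul_one, Matrix.nonsing_inv_mul _ hFt]
  have hUy : Uᴴ *ᵥ y = 0 := by
    rw [hUH, ← Matrix.mulVec_mulVec, ← Matrix.mulVec_mulVec, hGty, hVperpv, Matrix.mulVec_zero]
  have hUx : Uᴴ *ᵥ x = 0 := by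
    rw [hxdef, Matrix.mulVec_smul, hUy, smul_zero]
  have hUw : Uᴴ * w = 0 := by
    rw [hwdef, ← Matrix.replicateCol_mulVec, hUx, replicateCol_zero]
  have hwU : wᴴ * U = 0 := by
    have : wᴴ * U = (Uᴴ * w)ᴴ := by rw [conjTranspose_mul, conjTranspose_conjTranspose]
    rw [this, hUw, conjTranspose_zero]
  have hstarc : star (((c : ℝ) : ℂ))⁻¹ = (((c : ℝ) : ℂ))⁻¹ := by
    simp [Complex.conj_ofReal]
  have hcc : (((c : ℝ) : ℂ))⁻¹ * (((c : ℝ) : ℂ))⁻¹ = α⁻¹ := by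
    rw [← mul_inv, hc2]
  have hxx : star x ⬝ᵥ x = 1 := by
    rw [hxdef, star_smul, smul_dotProduct, dotProduct_smul, smul_eq_mul, smul_eq_mul, hyy,
      hstarc, ← mul_assoc, hcc, inv_mul_cancel₀ hα0]
  have hww : wᴴ * w = 1 := by
    rw [hwdef, conjTranspose_replicateCol, replicateRow_mul_replicateCol]
    ext i j
    simp [hxx, Matrix.one_apply, Subsingleton.elim i j]
  have hQQ : Qᴴ * Q = 1 := by
    rw [hQfc, conjTranspose_fromCols_eq_fromRows_conjTranspose, fromRows_mul_fromCols,
      hUU, hUw, hwU, hww, fromBlocks_one]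
  have hQdet : IsUnit Q.det := Matrix.isUnit_det_of_left_inverse hQQ
  have hQQ' : Q * Qᴴ = 1 := mul_eq_one_comm.mp hQQ
  -- positive definiteness of Ω
  have hGtinvH : IsUnit ((Gt⁻¹)ᴴ).det := by
    rw [Matrix.det_conjTranspose]; exact (Matrix.isUnit_nonsing_inv_det Gt hGt).star
  have hAPD : (Gt⁻¹ * Sig * (Gt⁻¹)ᴴ).PosDef := by
    have := posDef_conj hSig ((Gt⁻¹)ᴴ) hGtinvH
    simpa using this
  have hΩPD : Ω.PosDef := by
    rw [hΩ]; exact posDef_conj hAPD Q hQdet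
  have hΩ11 : Ω.toBlocks₁₁.PosDef := by
    refine PosDef.of_dotProduct_mulVec_pos ?_ ?_
    · ext i j
      have := congrFun (congrFun hΩPD.1 (Sum.inl i)) (Sum.inl j)
      simpa [Matrix.toBlocks₁₁, Matrix.conjTranspose_apply] using this
    · intro z hz
      have hz' : (Sum.elim z (0 : Fin 1 → ℂ)) ≠ 0 := by
        intro h
        apply hz
        funext i
        simpa using congrFun h (Sum.inl i)
      have hpos := hΩPD.dotProduct_mulVec_pos hz'
      have heq : star (Sum.elim z (0 : Fin 1 → ℂ)) ⬝ᵥ (Ω *ᵥ Sum.elim z (0 : Fin 1 → ℂ))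
          = star z ⬝ᵥ (Ω.toBlocks₁₁ *ᵥ z) := by
        simp [dotProduct, Matrix.mulVec, Fintype.sum_sum_type, Matrix.toBlocks₁₁,
          Function.star_sumElim]
      rw [heq] at hpos
      exact hpos
  have hdet11 : IsUnit Ω.toBlocks₁₁.det := hΩ11.det_pos.ne'.isUnit
  refine ⟨hdet11, ?_⟩
  -- the inverse of Ω
  have hΩdet : IsUnit Ω.det := hΩPD.det_pos.ne'.isUnit
  have hmid : (Gt⁻¹ * Sig * (Gt⁻¹)ᴴ) * ((Gtᴴ * Sig⁻¹ * Gt) * Q) = Q := by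
    simp only [Matrix.mul_assoc]
    rw [← Matrix.mul_assoc (Gt⁻¹)ᴴ Gtᴴ, e1, Matrix.one_mul,
      ← Matrix.mul_assoc Sig Sig⁻¹, Matrix.mul_nonsing_inv _ hSigdet, Matrix.one_mul,
      ← Matrix.mul_assoc Gt⁻¹ Gt, Matrix.nonsing_inv_mul _ hGt, Matrix.one_mul]
  have hright : Ω * (Qᴴ * (Gtᴴ * Sig⁻¹ * Gt) * Q) = 1 := by
    rw [hΩ]
    have hassoc : Qᴴ * (Gt⁻¹ * Sig * (Gt⁻¹)ᴴ) * Q * (Qᴴ * (Gtᴴ * Sig⁻¹ * Gt) * Q)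
        = Qᴴ * ((Gt⁻¹ * Sig * (Gt⁻¹)ᴴ) * ((Q * Qᴴ) * ((Gtᴴ * Sig⁻¹ * Gt) * Q))) := by
      simp only [Matrix.mul_assoc]
    rw [hassoc, hQQ', Matrix.one_mul, hmid, hQQ]
  have hWform : Ω⁻¹ = Qᴴ * (Gtᴴ * Sig⁻¹ * Gt) * Q := Matrix.inv_eq_right_inv hright
  have hW : Ω⁻¹ = fromBlocks (Uᴴ * ((Gtᴴ * Sig⁻¹ * Gt) * U)) (Uᴴ * ((Gtᴴ * Sig⁻¹ * Gt) * w))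
      (wᴴ * ((Gtᴴ * Sig⁻¹ * Gt) * U)) (wᴴ * ((Gtᴴ * Sig⁻¹ * Gt) * w)) := by
    rw [hWform, hQfc, conj_blocks]
  -- compute the (2,2) entry of Ω⁻¹
  have hNy : (Gtᴴ * Sig⁻¹ * Gt) *ᵥ y = Gtᴴ *ᵥ (Sig⁻¹ *ᵥ v) := by
    rw [← Matrix.mulVec_mulVec, hGty, ← Matrix.mulVec_mulVec]
  have hyN : star y ⬝ᵥ ((Gtᴴ * Sig⁻¹ * Gt) *ᵥ y) = β := by
    rw [hNy]
    calc star y ⬝ᵥ (Gtᴴ *ᵥ (Sig⁻¹ *ᵥ v))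
        = (star v ᵥ* (Gt⁻¹)ᴴ) ⬝ᵥ (Gtᴴ *ᵥ (Sig⁻¹ *ᵥ v)) := by rw [hydef, star_mulVec]
      _ = star v ⬝ᵥ ((Gt⁻¹)ᴴ *ᵥ (Gtᴴ *ᵥ (Sig⁻¹ *ᵥ v))) := by
          simp [Matrix.dotProduct_mulVec, Matrix.vecMul_vecMul, Matrix.mulVec_mulVec]
      _ = β := by rw [Matrix.mulVec_mulVec, e1, Matrix.one_mulVec, hβdef]
  have hxN : star x ⬝ᵥ ((Gtᴴ * Sig⁻¹ * Gt) *ᵥ x) = β / α := by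
    rw [hxdef, star_smul, Matrix.mulVec_smul, smul_dotProduct, dotProduct_smul,
      smul_eq_mul, smul_eq_mul, hyN, hstarc, ← mul_assoc, hcc,
      div_eq_mul_inv, mul_comm]
  have hD00 : (Ω⁻¹).toBlocks₂₂ 0 0 = β / α := by
    rw [hW, toBlocks_fromBlocks₂₂, hwdef, conjTranspose_replicateCol, ← Matrix.replicateCol_mulVec, replicateRow_mul_replicateCol_apply,
      hxN]
  -- block equations from Ω * Ω⁻¹ = 1
  set A := Ω.toBlocks₁₁ with hA
  set B := Ω.toBlocks₁₂ with hB
  set C := Ω.toBlocks₂₁ with hC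
  set D := Ω.toBlocks₂₂ with hD
  set A' := (Ω⁻¹).toBlocks₁₁ with hA'
  set B' := (Ω⁻¹).toBlocks₁₂ with hB'
  set C' := (Ω⁻¹).toBlocks₂₁ with hC'
  set D' := (Ω⁻¹).toBlocks₂₂ with hD'
  have hmm : fromBlocks (A * A' + B * C') (A * B' + B * D') (C * A' + D * C')
      (C * B' + D * D') = fromBlocks 1 0 0 1 := by
    rw [← fromBlocks_multiply, hA, hB, hC, hD, hA', hB', hC', hD',
      fromBlocks_toBlocks, fromBlocks_toBlocks, fromBlocks_one]
    exact Matrix.mul_nonsing_inv _ hΩdet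
  have e12 : A * B' + B * D' = 0 := by
    have h := congrArg Matrix.toBlocks₁₂ hmm
    rwa [Matrix.toBlocks_fromBlocks₁₂, Matrix.toBlocks_fromBlocks₁₂] at h
  have e22 : C * B' + D * D' = 1 := by
    have h := congrArg Matrix.toBlocks₂₂ hmm
    rwa [Matrix.toBlocks_fromBlocks₂₂, Matrix.toBlocks_fromBlocks₂₂] at h
  have hBD' : B * D' = -(A * B') := by
    have h := e12
    rw [add_comm, add_eq_zero_iff_eq_neg] at h
    exact h
  have hSchur : (D - C * A⁻¹ * B) * D' = 1 := by
    have hAinv : A⁻¹ * A = 1 := Matrix.nonsing_inv_mul _ hdet11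
    calc (D - C * A⁻¹ * B) * D'
        = D * D' - C * (A⁻¹ * (B * D')) := by
          rw [Matrix.sub_mul]; simp only [Matrix.mul_assoc]
      _ = D * D' + C * B' := by
          rw [hBD', Matrix.mul_neg, ← Matrix.mul_assoc, hAinv, Matrix.one_mul,
            Matrix.mul_neg, sub_neg_eq_add]
      _ = 1 := by rw [add_comm]; exact e22
  set s : ℂ := (D - C * A⁻¹ * B) 0 0 with hs
  have h00 : s * D' 0 0 = 1 := by
    have := congrFun (congrFun hSchur 0) 0
    simpa [Matrix.mul_apply, Fin.sum_univ_one, Matrix.one_apply, hs] using this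
  rw [hD00, div_eq_mul_inv, ← mul_assoc] at h00
  rw [eq_div_iff hβ0]
  exact (mul_inv_eq_one₀ hα0).mp h00
end

section
/- Let N ≥ 2, let U be a unitary N×N complex matrix, let Λ be a diagonal N×N real matrix with positive diagonal entries, and set Σ := U Λ Uᴴ. Let v ∈ ℂᴺ with ‖v‖ = 1, let V⊥ be an N×(N−1) complex matrix with V⊥ᴴV⊥ = I_{N−1} and V⊥ᴴv = 0, and let F be an invertible (N−1)×(N−1) matrix with F Fᴴ = V⊥ᴴ Σ V⊥. Let γ := vᴴ Σ⁻¹ v (a positive real number) and let V be the N×N matrix whose first N−1 columns are Λ^{1/2} Uᴴ V⊥ F⁻ᴴ and whose last column is γ^{−1/2} Λ^{−1/2} Uᴴ v. Let ℓ₁(1),…,ℓ₁(N−1) and ℓ₂ be positive real numbers, let D be the diagonal matrix with diagonal entries ℓ₁(1)⁻¹,…,ℓ₁(N−1)⁻¹, ℓ₂⁻¹, set W_t := V D Vᴴ and Σ_t := U Λ^{1/2} W_t Λ^{1/2} Uᴴ. Then V is unitary, Σ_t is Hermitian positive definite, and the generalized eigenrelation Σ_t⁻¹ v = ℓ₂ Σ⁻¹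 v holds. -/
open Matrix
open scoped ComplexOrder

private lemma cancel_aux {l m o : Type*} [Fintype m] [Fintype l] [DecidableEq l]
    {P : Matrix l m ℂ} {Q : Matrix m l ℂ} (h : P * Q = 1) (X : Matrix l o ℂ) :
    P * (Q * X) = X := by rw [← Matrix.mul_assoc, h, Matrix.one_mul]

private lemma assoc_aux {l m o p : Type*} [Fintype m] [Fintype o]
    {P : Matrix l m ℂ} {Q : Matrix m o ℂ} {R : Matrix l o ℂ} (h : P * Q = R)
    (X : Matrix o p ℂ) : P * (Q * X) = R * X := by rw [← Matrix.mul_assoc, h]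

/-- construction of Σ_t satisfying the GER in the eigenvalue-mismatch
case: V is unitary, Σ_t = UΛ^{1/2}(VDVᴴ)Λ^{1/2}Uᴴ is Hermitian positive definite and
Σ_t⁻¹v = ℓ₂Σ⁻¹v. -/
theorem stmt_12 {n : ℕ} (hn : 1 ≤ n)
    (U : Matrix (Fin n ⊕ Fin 1) (Fin n ⊕ Fin 1) ℂ) (hU : Uᴴ * U = 1)
    (Λ : (Fin n ⊕ Fin 1) → ℝ) (hΛ : ∀ i, 0 < Λ i)
    (Sig : Matrix (Fin n ⊕ Fin 1) (Fin n ⊕ Fin 1) ℂ)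
    (hSig : Sig = U * diagonal (fun i => (Λ i : ℂ)) * Uᴴ)
    (v : (Fin n ⊕ Fin 1) → ℂ) (hv : star v ⬝ᵥ v = 1)
    (Vperp : Matrix (Fin n ⊕ Fin 1) (Fin n) ℂ)
    (hVperp : Vperpᴴ * Vperp = 1) (hVperpv : Vperpᴴ *ᵥ v = 0)
    (F : Matrix (Fin n) (Fin n) ℂ) (hF : IsUnit F.det)
    (hFF : F * Fᴴ = Vperpᴴ * Sig * Vperp)
    (γ : ℝ) (hγpos : 0 < γ) (hγ : (γ : ℂ) = star v ⬝ᵥ (Sig⁻¹ *ᵥ v))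
    (V : Matrix (Fin n ⊕ Fin 1) (Fin n ⊕ Fin 1) ℂ)
    (hV : V = fromCols
        (diagonal (fun i => ((Real.sqrt (Λ i) : ℝ) : ℂ)) * Uᴴ * Vperp * (F⁻¹)ᴴ)
        (replicateCol (Fin 1) (((Real.sqrt γ : ℝ) : ℂ)⁻¹ •
          (diagonal (fun i => (((Real.sqrt (Λ i))⁻¹ : ℝ) : ℂ)) *ᵥ (Uᴴ *ᵥ v)))))
    (ℓ₁ : Fin n → ℝ) (hℓ₁ : ∀ i, 0 < ℓ₁ i) (ℓ₂ : ℝ) (hℓ₂ : 0 < ℓ₂)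
    (D : Matrix (Fin n ⊕ Fin 1) (Fin n ⊕ Fin 1) ℂ)
    (hD : D = diagonal (Sum.elim (fun i => (((ℓ₁ i)⁻¹ : ℝ) : ℂ))
        (fun _ => ((ℓ₂⁻¹ : ℝ) : ℂ))))
    (Wt : Matrix (Fin n ⊕ Fin 1) (Fin n ⊕ Fin 1) ℂ) (hWt : Wt = V * D * Vᴴ)
    (Sigt : Matrix (Fin n ⊕ Fin 1) (Fin n ⊕ Fin 1) ℂ)
    (hSigt : Sigt = U * diagonal (fun i => ((Real.sqrt (Λ i) : ℝ) : ℂ)) * Wt *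
        diagonal (fun i => ((Real.sqrt (Λ i) : ℝ) : ℂ)) * Uᴴ) :
    Vᴴ * V = 1 ∧ Sigt.PosDef ∧ Sigt⁻¹ *ᵥ v = ((ℓ₂ : ℝ) : ℂ) • (Sig⁻¹ *ᵥ v) := by
  have hUU' : U * Uᴴ = 1 := mul_eq_one_comm.mp hU
  have hsqpos : ∀ i, 0 < Real.sqrt (Λ i) := fun i => Real.sqrt_pos.mpr (hΛ i)
  have hsγ : Real.sqrt γ ≠ 0 := (Real.sqrt_pos.mpr hγpos).ne'
  set S := diagonal (fun i => ((Real.sqrt (Λ i) : ℝ) : ℂ)) with hSdef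
  set T := diagonal (fun i => (((Real.sqrt (Λ i))⁻¹ : ℝ) : ℂ)) with hTdef
  have hST : S * T = 1 := by
    rw [hSdef, hTdef, diagonal_mul_diagonal]
    have h1 : (fun i => ((Real.sqrt (Λ i) : ℝ) : ℂ) * (((Real.sqrt (Λ i))⁻¹ : ℝ) : ℂ))
        = (fun _ => (1 : ℂ)) := funext fun i => by
      rw [← Complex.ofReal_mul, mul_inv_cancel₀ (hsqpos i).ne', Complex.ofReal_one]
    rw [h1]
    exact Matrix.diagonal_one
  have hTS : T * S = 1 := mul_eq_one_comm.mp hST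
  have hSS : S * S = diagonal (fun i => (Λ i : ℂ)) := by
    rw [hSdef, diagonal_mul_diagonal]
    have h1 : (fun i => ((Real.sqrt (Λ i) : ℝ) : ℂ) * ((Real.sqrt (Λ i) : ℝ) : ℂ))
        = (fun i => (Λ i : ℂ)) := funext fun i => by
      rw [← Complex.ofReal_mul, Real.mul_self_sqrt (hΛ i).le]
    rw [h1]
  have hTT : T * T = diagonal (fun i => (((Λ i)⁻¹ : ℝ) : ℂ)) := by
    rw [hTdef, diagonal_mul_diagonal]
    have h1 : (fun i => (((Real.sqrt (Λ i))⁻¹ : ℝ) : ℂ) * (((Real.sqrt (Λ i))⁻¹ : ℝ) : ℂ))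
        = (fun i => (((Λ i)⁻¹ : ℝ) : ℂ)) := funext fun i => by
      rw [← Complex.ofReal_mul, ← mul_inv, Real.mul_self_sqrt (hΛ i).le]
    rw [h1]
  have hΛinv : diagonal (fun i => (Λ i : ℂ)) * diagonal (fun i => (((Λ i)⁻¹ : ℝ) : ℂ)) = 1 := by
    rw [diagonal_mul_diagonal]
    have h1 : (fun i => ((Λ i : ℝ) : ℂ) * (((Λ i)⁻¹ : ℝ) : ℂ)) = (fun _ => (1 : ℂ)) :=
      funext fun i => by
        rw [← Complex.ofReal_mul, mul_inv_cancel₀ (hΛ i).ne', Complex.ofReal_one]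
    rw [h1]
    exact Matrix.diagonal_one
  have hSH : Sᴴ = S := by
    rw [hSdef, diagonal_conjTranspose]
    have h1 : star (fun i => ((Real.sqrt (Λ i) : ℝ) : ℂ))
        = (fun i => ((Real.sqrt (Λ i) : ℝ) : ℂ)) := funext fun i => by
      simp [Complex.conj_ofReal]
    rw [h1]
  have hTH : Tᴴ = T := by
    rw [hTdef, diagonal_conjTranspose]
    have h1 : star (fun i => (((Real.sqrt (Λ i))⁻¹ : ℝ) : ℂ))
        = (fun i => (((Real.sqrt (Λ i))⁻¹ : ℝ) : ℂ)) := funext fun i => by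
      simp [Complex.conj_ofReal]
    rw [h1]
  have hSigInv : Sig⁻¹ = U * diagonal (fun i => (((Λ i)⁻¹ : ℝ) : ℂ)) * Uᴴ := by
    apply Matrix.inv_eq_right_inv
    rw [hSig]
    simp only [Matrix.mul_assoc, cancel_aux hU, cancel_aux hΛinv, hUU']
  have hFiF : F⁻¹ * F = 1 := Matrix.nonsing_inv_mul F hF
  have hFHu : IsUnit Fᴴ.det := by rw [Matrix.det_conjTranspose]; exact hF.star
  have hFHFHi : Fᴴ * (Fᴴ)⁻¹ = 1 := Matrix.mul_nonsing_inv _ hFHu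
  have hFiH : (F⁻¹)ᴴ = (Fᴴ)⁻¹ := Matrix.conjTranspose_nonsing_inv (A := F)
  set A := S * Uᴴ * Vperp * (F⁻¹)ᴴ with hAdef
  set x := T *ᵥ (Uᴴ *ᵥ v) with hxdef
  set c : ℂ := (((Real.sqrt γ : ℝ) : ℂ))⁻¹ with hcdef
  set w := c • x with hwdef
  have hcstar : star c = c := by
    rw [hcdef, star_inv₀, Complex.star_def, Complex.conj_ofReal]
  have hAH : Aᴴ = F⁻¹ * (Vperpᴴ * (U * S)) := by
    rw [hAdef]
    simp only [conjTranspose_mul, conjTranspose_conjTranspose, hSH, Matrix.mul_assoc]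
  have hSigX : ∀ (X : Matrix (Fin n ⊕ Fin 1) (Fin n) ℂ),
      U * (diagonal (fun i => (Λ i : ℂ)) * (Uᴴ * X)) = Sig * X := fun X => by
    rw [hSig, Matrix.mul_assoc, Matrix.mul_assoc]
  have hFFX : ∀ (X : Matrix (Fin n) (Fin n) ℂ),
      Vperpᴴ * (Sig * (Vperp * X)) = F * (Fᴴ * X) := fun X => by
    rw [← Matrix.mul_assoc, ← Matrix.mul_assoc, ← hFF, Matrix.mul_assoc]
  have hAA : Aᴴ * A = 1 := by
    rw [hAH, hAdef]
    simp only [Matrix.mul_assoc, assoc_aux hSS, hSigX, hFFX, cancel_aux hFiF, hFiH, hFHFHi]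
  have hAx : Aᴴ *ᵥ x = 0 := by
    rw [hxdef]
    simp only [Matrix.mulVec_mulVec]
    have hmat : Aᴴ * (T * Uᴴ) = F⁻¹ * Vperpᴴ := by
      rw [hAH]
      simp only [Matrix.mul_assoc, cancel_aux hST]
      rw [hUU', Matrix.mul_one]
    rw [hmat, ← Matrix.mulVec_mulVec, hVperpv, Matrix.mulVec_zero]
  have hUTTU : U * T * (T * Uᴴ) = Sig⁻¹ := by
    rw [hSigInv]
    simp only [Matrix.mul_assoc, assoc_aux hTT]
  have hxx : star x ⬝ᵥ x = (γ : ℂ) := by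
    have hsx : star x = star v ᵥ* (U * T) := by
      rw [hxdef, Matrix.mulVec_mulVec, star_mulVec, conjTranspose_mul, hTH,
        conjTranspose_conjTranspose]
    rw [hsx, ← dotProduct_mulVec, hxdef, Matrix.mulVec_mulVec, Matrix.mulVec_mulVec,
      Matrix.mul_assoc (U * T) T Uᴴ, hUTTU, ← hγ]
  have hr2 : (Real.sqrt γ)⁻¹ * γ = Real.sqrt γ := by
    rw [inv_mul_eq_div, div_eq_iff hsγ]
    exact (Real.mul_self_sqrt hγpos.le).symm
  have hwx : star w ⬝ᵥ x = ((Real.sqrt γ : ℝ) : ℂ) := by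
    rw [hwdef, star_smul, hcstar, smul_dotProduct, hxx, smul_eq_mul, hcdef,
      ← Complex.ofReal_inv, ← Complex.ofReal_mul, hr2]
  have hww : star w ⬝ᵥ w = 1 := by
    rw [hwdef, dotProduct_smul, hwx, smul_eq_mul, hcdef, ← Complex.ofReal_inv,
      ← Complex.ofReal_mul, inv_mul_cancel₀ hsγ, Complex.ofReal_one]
  have hVH : Vᴴ = fromRows Aᴴ (replicateRow (Fin 1) (star w)) := by
    rw [hV, conjTranspose_fromCols_eq_fromRows_conjTranspose, conjTranspose_replicateCol]
  -- Part 1 : V is unitary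
  have hVHV : Vᴴ * V = 1 := by
    rw [hVH, hV, fromRows_mul_fromCols]
    have h12 : Aᴴ * replicateCol (Fin 1) w = 0 := by
      rw [← replicateCol_mulVec, hwdef, Matrix.mulVec_smul, hAx, smul_zero]
      ext i j
      simp
    have h21 : replicateRow (Fin 1) (star w) * A = 0 := by
      have h := congrArg conjTranspose h12
      rwa [conjTranspose_mul, conjTranspose_conjTranspose, conjTranspose_replicateCol,
        conjTranspose_zero] at h
    have h22 : replicateRow (Fin 1) (star w) * replicateCol (Fin 1) w = 1 := by
      ext i j
      rw [replicateRow_mul_replicateCol_apply, hww, Subsingleton.elim i j, Matrix.one_apply_eq]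
    rw [hAA, h12, h21, h22, fromBlocks_one]
  have hVV' : V * Vᴴ = 1 := mul_eq_one_comm.mp hVHV
  -- Part 2 : Sigt is positive definite
  have hDH : Dᴴ = D := by
    rw [hD, diagonal_conjTranspose]
    have h1 : star (Sum.elim (fun i : Fin n => (((ℓ₁ i)⁻¹ : ℝ) : ℂ)) (fun _ : Fin 1 => ((ℓ₂⁻¹ : ℝ) : ℂ)))
        = Sum.elim (fun i : Fin n => (((ℓ₁ i)⁻¹ : ℝ) : ℂ)) (fun _ : Fin 1 => ((ℓ₂⁻¹ : ℝ) : ℂ)) :=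
      funext fun i => by cases i <;> simp [Complex.conj_ofReal]
    rw [h1]
  have hDpos : D.PosDef := by
    rw [hD]
    refine Matrix.PosDef.diagonal fun i => ?_
    cases i with
    | inl i => simpa using Complex.zero_lt_real.mpr (inv_pos.mpr (hℓ₁ i))
    | inr i => simpa using Complex.zero_lt_real.mpr (inv_pos.mpr hℓ₂)
  have hMdec : Sigt = (U * S * V) * D * (U * S * V)ᴴ := by
    rw [hSigt, hWt]
    simp only [conjTranspose_mul, hSH, Matrix.mul_assoc]
  have hLM : (U * T * V) * (U * S * V)ᴴ = 1 := by
    simp only [conjTranspose_mul, hSH, Matrix.mul_assoc, cancel_aux hVV', cancel_aux hTS, hUU']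
  have hposdef : Sigt.PosDef := by
    refine Matrix.posDef_iff_dotProduct_mulVec.mpr ⟨?_, ?_⟩
    · show Sigtᴴ = Sigt
      rw [hMdec]
      simp only [conjTranspose_mul, conjTranspose_conjTranspose, hDH, Matrix.mul_assoc]
    · intro z hz
      have hy : (U * S * V)ᴴ *ᵥ z ≠ 0 := by
        intro h0
        have hzz : z = (U * T * V) *ᵥ ((U * S * V)ᴴ *ᵥ z) := by
          rw [Matrix.mulVec_mulVec, hLM, Matrix.one_mulVec]
        exact hz (by rw [hzz, h0, Matrix.mulVec_zero])
      have key : star z ⬝ᵥ (Sigt *ᵥ z)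
          = star ((U * S * V)ᴴ *ᵥ z) ⬝ᵥ (D *ᵥ ((U * S * V)ᴴ *ᵥ z)) := by
        rw [hMdec, star_mulVec, conjTranspose_conjTranspose, ← dotProduct_mulVec]
        simp only [← Matrix.mulVec_mulVec]
      rw [key]
      exact hDpos.dotProduct_mulVec_pos hy
  -- Part 3 : the generalized eigenrelation
  set E := diagonal (Sum.elim (fun i : Fin n => ((ℓ₁ i : ℝ) : ℂ)) (fun _ : Fin 1 => ((ℓ₂ : ℝ) : ℂ))) with hEdef
  have hDE : D * E = 1 := by
    rw [hD, hEdef, diagonal_mul_diagonal]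
    have h1 : (fun i : Fin n ⊕ Fin 1 =>
        Sum.elim (fun i : Fin n => (((ℓ₁ i)⁻¹ : ℝ) : ℂ)) (fun _ : Fin 1 => ((ℓ₂⁻¹ : ℝ) : ℂ)) i *
        Sum.elim (fun i : Fin n => ((ℓ₁ i : ℝ) : ℂ)) (fun _ : Fin 1 => ((ℓ₂ : ℝ) : ℂ)) i)
        = (fun _ => (1 : ℂ)) := by
      funext i
      cases i with
      | inl i =>
        simp only [Sum.elim_inl]
        rw [← Complex.ofReal_mul, inv_mul_cancel₀ (hℓ₁ i).ne', Complex.ofReal_one]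
      | inr i =>
        simp only [Sum.elim_inr]
        rw [← Complex.ofReal_mul, inv_mul_cancel₀ hℓ₂.ne', Complex.ofReal_one]
    rw [h1]
    exact Matrix.diagonal_one
  have hG : Sigt⁻¹ = U * T * V * E * Vᴴ * T * Uᴴ := by
    apply Matrix.inv_eq_right_inv
    rw [hSigt, hWt]
    simp only [Matrix.mul_assoc, cancel_aux hU, cancel_aux hST, cancel_aux hVHV,
      cancel_aux hVV', cancel_aux hDE, hUU']
  have hVx : Vᴴ *ᵥ x = Sum.elim (0 : Fin n → ℂ)
      (Function.const (Fin 1) ((Real.sqrt γ : ℝ) : ℂ)) := by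
    rw [hVH, fromRows_mulVec, hAx, replicateRow_mulVec_eq_const, hwx]
  have hEvec : E *ᵥ Sum.elim (0 : Fin n → ℂ)
      (Function.const (Fin 1) ((Real.sqrt γ : ℝ) : ℂ))
      = Sum.elim (0 : Fin n → ℂ)
        (Function.const (Fin 1) ((ℓ₂ : ℂ) * ((Real.sqrt γ : ℝ) : ℂ))) := by
    funext i
    cases i <;> simp [hEdef, mulVec_diagonal]
  have hVvec : V *ᵥ Sum.elim (0 : Fin n → ℂ)
      (Function.const (Fin 1) ((ℓ₂ : ℂ) * ((Real.sqrt γ : ℝ) : ℂ))) = (ℓ₂ : ℂ) • x := by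
    rw [hV, fromCols_mulVec_sumElim, Matrix.mulVec_zero, zero_add]
    have hcol : replicateCol (Fin 1) w *ᵥ Function.const (Fin 1) ((ℓ₂ : ℂ) * ((Real.sqrt γ : ℝ) : ℂ))
        = ((ℓ₂ : ℂ) * ((Real.sqrt γ : ℝ) : ℂ)) • w := by
      funext i
      simp [Matrix.mulVec, Matrix.replicateCol, dotProduct, Function.const, mul_comm]
    rw [hcol, hwdef, smul_smul]
    congr 1
    rw [hcdef, mul_assoc, mul_inv_cancel₀ (Complex.ofReal_ne_zero.mpr hsγ), mul_one]
  refine ⟨hVHV, hposdef, ?_⟩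
  rw [hG]
  simp only [← Matrix.mulVec_mulVec]
  rw [← hxdef, hVx, hEvec, hVvec, Matrix.mulVec_smul, Matrix.mulVec_smul]
  congr 1
  rw [hxdef]
  simp only [Matrix.mulVec_mulVec]
  rw [show U * (T * (T * Uᴴ)) = Sig⁻¹ from by rw [← Matrix.mul_assoc U T (T * Uᴴ), hUTTU]]
end

section
/- Let N ≥ 2, let v ∈ ℂᴺ with ‖v‖ = 1, let V⊥ be an N×(N−1) complex matrix with V⊥ᴴV⊥ = I_{N−1} and V⊥ᴴv = 0, and let Q_v := [V⊥, v] be the N×N matrix whose first N−1 columns are those of V⊥ and whose last column is v (so Q_v is unitary). Let Σ be a Hermitian positive definite N×N complex matrix and let L be an invertible lower-triangular N×N matrix with L Lᴴ = Q_vᴴ Σ Q_v. Let Ψ₁₁ be a Hermitian positive definite (N−1)×(N−1) matrix, let ψ₂₂ be a positive real number, and define Σ_t := Q_v L [[Ψ₁₁⁻¹, 0],[0, ψ₂₂⁻¹]] Lᴴ Q_vᴴ, where [[Ψ₁₁⁻¹, 0],[0, ψ₂₂⁻¹]] is the block-diagonal matrix with upper-left block Ψ₁₁⁻¹ and lower-right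 1×1 block ψ₂₂⁻¹. Then Σ_t is Hermitian positive definite and the generalized eigenrelation Σ_t⁻¹ v = ψ₂₂ Σ⁻¹ v holds. -/
open Matrix
open scoped ComplexOrder

lemma aux_posDef_fromBlocks {m k : Type*} [Fintype m] [Fintype k] [DecidableEq m] [DecidableEq k]
    {P : Matrix m m ℂ} {Q : Matrix k k ℂ} (hP : P.PosDef) (hQ : Q.PosDef) :
    (fromBlocks P 0 0 Q).PosDef := by
  refine posDef_iff_dotProduct_mulVec.mpr ⟨?_, ?_⟩
  · unfold Matrix.IsHermitian
    rw [fromBlocks_conjTranspose]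
    simp [hP.1.eq, hQ.1.eq]
  · intro x hx
    have hxe : x = Sum.elim (x ∘ Sum.inl) (x ∘ Sum.inr) := (Sum.elim_comp_inl_inr x).symm
    rw [hxe, fromBlocks_mulVec]
    simp only [zero_mulVec, add_zero, zero_add]
    have hstar : star (Sum.elim (x ∘ Sum.inl) (x ∘ Sum.inr)) =
        Sum.elim (star (x ∘ Sum.inl)) (star (x ∘ Sum.inr)) := by
      ext (i | i) <;> rfl
    rw [hstar, sumElim_dotProduct_sumElim]
    rcases (by
      by_contra h
      push_neg at h
      apply hx
      ext (i | i)
      · exact congrFun h.1 i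
      · exact congrFun h.2 i : x ∘ Sum.inl ≠ 0 ∨ x ∘ Sum.inr ≠ 0) with h | h
    · exact add_pos_of_pos_of_nonneg (hP.dotProduct_mulVec_pos h) (hQ.posSemidef.dotProduct_mulVec_nonneg _)
    · exact add_pos_of_nonneg_of_pos (hP.posSemidef.dotProduct_mulVec_nonneg _) (hQ.dotProduct_mulVec_pos h)

lemma aux_posDef_conj {m : Type*} [Fintype m] [DecidableEq m]
    {M A : Matrix m m ℂ} (hM : M.PosDef) (hA : IsUnit A.det) :
    (A * M * Aᴴ).PosDef := by
  refine posDef_iff_dotProduct_mulVec.mpr ⟨?_, ?_⟩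
  · unfold Matrix.IsHermitian
    rw [conjTranspose_mul, conjTranspose_mul, conjTranspose_conjTranspose, hM.1.eq, mul_assoc]
  · intro x hx
    have h1 : (A * M * Aᴴ) *ᵥ x = A *ᵥ (M *ᵥ (Aᴴ *ᵥ x)) := by
      rw [mulVec_mulVec, mulVec_mulVec]
    have h2 : star x ⬝ᵥ (A *ᵥ (M *ᵥ (Aᴴ *ᵥ x))) = star (Aᴴ *ᵥ x) ⬝ᵥ (M *ᵥ (Aᴴ *ᵥ x)) := by
      rw [dotProduct_mulVec, star_mulVec, conjTranspose_conjTranspose]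
    rw [h1, h2]
    refine hM.dotProduct_mulVec_pos fun h => hx ?_
    have hAu : IsUnit Aᴴ.det := by rwa [det_conjTranspose, isUnit_star]
    have hinj := Matrix.mulVec_injective_iff_isUnit.mpr ((Matrix.isUnit_iff_isUnit_det _).mpr hAu)
    have h0 : Aᴴ *ᵥ x = Aᴴ *ᵥ 0 := by simpa using h
    exact hinj h0

/-- Cholesky-based construction of Σ_t satisfying the GER:
with Σ_t = Q_v L blkdiag(Ψ₁₁⁻¹, ψ₂₂⁻¹) Lᴴ Q_vᴴ, the matrix Σ_t is Hermitian positive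
definite and Σ_t⁻¹v = ψ₂₂ Σ⁻¹v (and Q_v is unitary). -/
theorem stmt_13 {n : ℕ} (hn : 1 ≤ n)
    (v : (Fin n ⊕ Fin 1) → ℂ) (hv : star v ⬝ᵥ v = 1)
    (Vperp : Matrix (Fin n ⊕ Fin 1) (Fin n) ℂ)
    (hVperp : Vperpᴴ * Vperp = 1) (hVperpv : Vperpᴴ *ᵥ v = 0)
    (Qv : Matrix (Fin n ⊕ Fin 1) (Fin n ⊕ Fin 1) ℂ)
    (hQv : Qv = fromCols Vperp (replicateCol (Fin 1) v))
    (Sig : Matrix (Fin n ⊕ Fin 1) (Fin n ⊕ Fin 1) ℂ) (hSig : Sig.PosDef)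
    (L : Matrix (Fin n ⊕ Fin 1) (Fin n ⊕ Fin 1) ℂ) (hL : IsUnit L.det)
    (hLtri : ∀ i j : Fin n ⊕ Fin 1,
      Sum.elim (fun k : Fin n => (k : ℕ)) (fun _ => n) i <
        Sum.elim (fun k : Fin n => (k : ℕ)) (fun _ => n) j → L i j = 0)
    (hLL : L * Lᴴ = Qvᴴ * Sig * Qv)
    (Ψ₁₁ : Matrix (Fin n) (Fin n) ℂ) (hΨ₁₁ : Ψ₁₁.PosDef)
    (ψ₂₂ : ℝ) (hψ₂₂ : 0 < ψ₂₂)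
    (Sigt : Matrix (Fin n ⊕ Fin 1) (Fin n ⊕ Fin 1) ℂ)
    (hSigt : Sigt = Qv * L *
        fromBlocks Ψ₁₁⁻¹ 0 0 (((ψ₂₂⁻¹ : ℝ) : ℂ) • (1 : Matrix (Fin 1) (Fin 1) ℂ)) *
        Lᴴ * Qvᴴ) :
    Qvᴴ * Qv = 1 ∧ Sigt.PosDef ∧ Sigt⁻¹ *ᵥ v = ((ψ₂₂ : ℝ) : ℂ) • (Sig⁻¹ *ᵥ v) := by
  -- unitarity
  have hcol : Vperpᴴ * replicateCol (Fin 1) v = 0 := by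
    rw [← replicateCol_mulVec, hVperpv]
    ext i j; simp
  have h22 : (replicateCol (Fin 1) v)ᴴ * replicateCol (Fin 1) v = 1 := by
    ext i j
    have hij : i = j := Subsingleton.elim i j
    subst hij
    simpa [Matrix.mul_apply, conjTranspose_apply, Matrix.one_apply, dotProduct] using hv
  have hQQ : Qvᴴ * Qv = 1 := by
    rw [hQv, conjTranspose_fromCols_eq_fromRows_conjTranspose, fromRows_mul_fromCols,
      hVperp, hcol, h22]
    have h21 : (replicateCol (Fin 1) v)ᴴ * Vperp = 0 := by
      have := congrArg conjTranspose hcol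
      simpa [conjTranspose_mul] using this
    rw [h21, fromBlocks_one]
  have hQQ' : Qv * Qvᴴ = 1 := mul_eq_one_comm.mp hQQ
  -- determinant facts
  have hQdet : IsUnit Qv.det := by
    have h := congrArg Matrix.det hQQ
    rw [det_mul, det_one] at h
    exact isUnit_of_mul_isUnit_right (h ▸ isUnit_one)
  have hΨdet : IsUnit Ψ₁₁.det := hΨ₁₁.det_pos.ne'.isUnit
  set D : Matrix (Fin n ⊕ Fin 1) (Fin n ⊕ Fin 1) ℂ :=
    fromBlocks Ψ₁₁⁻¹ 0 0 (((ψ₂₂⁻¹ : ℝ) : ℂ) • (1 : Matrix (Fin 1) (Fin 1) ℂ)) with hD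
  set Dinv : Matrix (Fin n ⊕ Fin 1) (Fin n ⊕ Fin 1) ℂ :=
    fromBlocks Ψ₁₁ 0 0 (((ψ₂₂ : ℝ) : ℂ) • (1 : Matrix (Fin 1) (Fin 1) ℂ)) with hDinv
  have hψmul : ((ψ₂₂⁻¹ : ℝ) : ℂ) * ((ψ₂₂ : ℝ) : ℂ) = 1 := by
    rw [← Complex.ofReal_mul, inv_mul_cancel₀ hψ₂₂.ne', Complex.ofReal_one]
  have hDDinv : D * Dinv = 1 := by
    rw [hD, hDinv, fromBlocks_multiply]
    rw [Matrix.nonsing_inv_mul Ψ₁₁ hΨdet, smul_mul_smul_comm, hψmul, one_mul, one_smul]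
    simp [fromBlocks_one]
  have hSigEq : Sig = Qv * (L * Lᴴ) * Qvᴴ := by
    rw [hLL]
    simp only [← mul_assoc]
    rw [hQQ', one_mul, mul_assoc, hQQ', mul_one]
  have hSigtinv : Sigt⁻¹ = Qv * (L⁻¹)ᴴ * Dinv * L⁻¹ * Qvᴴ := by
    rw [hSigt, Matrix.mul_inv_rev, Matrix.mul_inv_rev, Matrix.mul_inv_rev, Matrix.mul_inv_rev,
      inv_eq_left_inv hQQ, inv_eq_left_inv hQQ', inv_eq_right_inv hDDinv,
      ← Matrix.conjTranspose_nonsing_inv]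
    simp only [mul_assoc]
  have hSiginv : Sig⁻¹ = Qv * (L⁻¹)ᴴ * L⁻¹ * Qvᴴ := by
    rw [hSigEq, Matrix.mul_inv_rev, Matrix.mul_inv_rev, Matrix.mul_inv_rev,
      inv_eq_left_inv hQQ, inv_eq_left_inv hQQ', ← Matrix.conjTranspose_nonsing_inv]
    simp only [mul_assoc]
  -- positive definiteness
  have hDpos : D.PosDef := by
    rw [hD]
    refine aux_posDef_fromBlocks hΨ₁₁.inv ?_
    have : (((ψ₂₂⁻¹ : ℝ) : ℂ) • (1 : Matrix (Fin 1) (Fin 1) ℂ)) =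
        Matrix.diagonal (fun _ => ((ψ₂₂⁻¹ : ℝ) : ℂ)) := by
      ext i j
      have hij : i = j := Subsingleton.elim i j
      subst hij
      simp
    rw [this]
    exact Matrix.PosDef.diagonal fun _ => by
      rw [Complex.zero_lt_real]
      exact inv_pos.mpr hψ₂₂
  have hSigtPos : Sigt.PosDef := by
    have hform : Sigt = (Qv * L) * D * (Qv * L)ᴴ := by
      rw [hSigt, conjTranspose_mul]
      simp only [mul_assoc]
    rw [hform]
    refine aux_posDef_conj hDpos ?_
    rw [det_mul]
    exact hQdet.mul hL
  refine ⟨hQQ, hSigtPos, ?_⟩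
  -- the generalized eigenrelation
  have he : Qvᴴ *ᵥ v = Sum.elim (0 : Fin n → ℂ) 1 := by
    rw [hQv, conjTranspose_fromCols_eq_fromRows_conjTranspose, fromRows_mulVec, hVperpv]
    ext (i | i)
    · simp
    · exact hv
  haveI : Invertible L := L.invertibleOfIsUnitDet hL
  have htri : L.BlockTriangular
      (OrderDual.toDual ∘ Sum.elim (fun k : Fin n => (k : ℕ)) (fun _ => n)) :=
    fun i j h => hLtri i j h
  have htri' := Matrix.blockTriangular_inv_of_blockTriangular htri
  have hz : ∀ (k : Fin n) (j : Fin 1), L⁻¹ (Sum.inl k) (Sum.inr j) = 0 :=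
    fun k j => htri' (k.isLt)
  have hDw : Dinv *ᵥ (L⁻¹ *ᵥ Sum.elim (0 : Fin n → ℂ) 1) =
      ((ψ₂₂ : ℝ) : ℂ) • (L⁻¹ *ᵥ Sum.elim (0 : Fin n → ℂ) 1) := by
    ext (i | i)
    · simp [hDinv, Matrix.mulVec, dotProduct, Fintype.sum_sum_type, fromBlocks, hz]
    · simp only [hDinv, Matrix.mulVec, dotProduct, Fintype.sum_sum_type, Pi.smul_apply]
      simp [fromBlocks, Matrix.one_apply, hz, Subsingleton.elim i 0]
  rw [hSigtinv, hSiginv]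
  simp only [← Matrix.mulVec_mulVec]
  rw [he, hDw, Matrix.mulVec_smul, Matrix.mulVec_smul]
end

section
/- Let N ≥ 2, let W be a Hermitian positive definite N×N complex matrix partitioned in block form W = [[W₁₁, W₁₂],[W₂₁, W₂₂]] with W₁₁ of size (N−1)×(N−1), let x ∈ ℂᴺ be partitioned as x = (x₁, x₂) with x₁ ∈ ℂᴺ⁻¹, x₂ ∈ ℂ, let e_N be the last standard basis vector of ℂᴺ, and let κ > 0 be a real number. Define s₁ := xᴴ W⁻¹ x, s₂ := |xᴴ W⁻¹ e_N|² / (e_Nᴴ W⁻¹ e_N) and W₂.₁ := W₂₂ − W₂₁ W₁₁⁻¹ W₁₂. Then s₂ / (κ + s₁ − s₂) = |x₂ − W₂₁ W₁₁⁻¹ x₁|² / (W₂.₁ · (κ + x₁ᴴ W₁₁⁻¹ x₁)). -/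
open Matrix
open scoped ComplexOrder

/-- Kalson's statistic s₂/(κ + s₁ − s₂) expressed through the blocks of W. -/
theorem stmt_15 {n : ℕ} (hn : 1 ≤ n)
    (W₁₁ : Matrix (Fin n) (Fin n) ℂ) (W₁₂ : Matrix (Fin n) (Fin 1) ℂ)
    (W₂₁ : Matrix (Fin 1) (Fin n) ℂ) (W₂₂ : Matrix (Fin 1) (Fin 1) ℂ)
    (hW : (fromBlocks W₁₁ W₁₂ W₂₁ W₂₂).PosDef)
    (x₁ : Fin n → ℂ) (x₂ : ℂ) (κ : ℝ) (hκ : 0 < κ)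
    (s₁ s₂ : ℂ)
    (hs₁ : s₁ = star (Sum.elim x₁ fun _ => x₂) ⬝ᵥ
        ((fromBlocks W₁₁ W₁₂ W₂₁ W₂₂)⁻¹ *ᵥ Sum.elim x₁ fun _ => x₂))
    (hs₂ : s₂ = ((‖star (Sum.elim x₁ fun _ => x₂) ⬝ᵥ
          ((fromBlocks W₁₁ W₁₂ W₂₁ W₂₂)⁻¹ *ᵥ
            Sum.elim (0 : Fin n → ℂ) (1 : Fin 1 → ℂ))‖ ^ 2 : ℝ) : ℂ) /
        (star (Sum.elim (0 : Fin n → ℂ) (1 : Fin 1 → ℂ)) ⬝ᵥ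
          ((fromBlocks W₁₁ W₁₂ W₂₁ W₂₂)⁻¹ *ᵥ
            Sum.elim (0 : Fin n → ℂ) (1 : Fin 1 → ℂ)))) :
    s₂ / ((κ : ℂ) + s₁ - s₂) =
      ((‖x₂ - ((W₂₁ * W₁₁⁻¹) *ᵥ x₁) 0‖ ^ 2 : ℝ) : ℂ) /
        ((W₂₂ - W₂₁ * W₁₁⁻¹ * W₁₂) 0 0 *
          ((κ : ℂ) + star x₁ ⬝ᵥ (W₁₁⁻¹ *ᵥ x₁))) := by
  have hH := hW.isHermitian
  -- W₁₁ is positive definite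
  have hA : W₁₁.PosDef := by
    refine Matrix.PosDef.of_dotProduct_mulVec_pos ?_ ?_
    · ext i j
      have h := congrFun (congrFun hH (Sum.inl i)) (Sum.inl j)
      simpa using h
    · intro y hy
      have h := hW.dotProduct_mulVec_pos (x := Sum.elim y 0) (by
        intro h0
        apply hy
        ext i
        simpa using congrFun h0 (Sum.inl i))
      simpa [Function.star_sumElim, fromBlocks_mulVec, sumElim_dotProduct_sumElim] using h
  have hC : W₁₂ᴴ = W₂₁ := by
    ext i j
    have h := congrFun (congrFun hH (Sum.inr i)) (Sum.inl j)
    simpa using h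
  have hD : W₂₂.IsHermitian := by
    ext i j
    have h := congrFun (congrFun hH (Sum.inr i)) (Sum.inr j)
    simpa using h
  have hAdet : IsUnit W₁₁.det := (Matrix.isUnit_iff_isUnit_det _).1 hA.isUnit
  have hMdet : IsUnit (fromBlocks W₁₁ W₁₂ W₂₁ W₂₂).det := (Matrix.isUnit_iff_isUnit_det _).1 hW.isUnit
  haveI iA : Invertible W₁₁ := hA.isUnit.invertible
  set σ : ℂ := (W₂₂ - W₂₁ * W₁₁⁻¹ * W₁₂) 0 0 with hσdef
  have hσ0 : σ ≠ 0 := by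
    have hd : (fromBlocks W₁₁ W₁₂ W₂₁ W₂₂).det = W₁₁.det * (W₂₂ - W₂₁ * ⅟W₁₁ * W₁₂).det :=
      det_fromBlocks₁₁ _ _ _ _
    rw [invOf_eq_nonsing_inv] at hd
    have h1 : (W₂₂ - W₂₁ * W₁₁⁻¹ * W₁₂).det ≠ 0 := by
      intro h0
      rw [h0, mul_zero] at hd
      exact (hd ▸ hMdet).ne_zero rfl
    rwa [det_fin_one] at h1
  have hAinv : W₁₁⁻¹.IsHermitian := hA.isHermitian.inv
  have hS : (W₂₂ - W₂₁ * W₁₁⁻¹ * W₁₂).IsHermitian := by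
    rw [← hC]
    exact hD.sub (isHermitian_conjTranspose_mul_mul W₁₂ hAinv)
  have hσc : (starRingEnd ℂ) σ = σ := by
    have h := congrFun (congrFun hS 0) 0
    simpa [hσdef, Matrix.sub_apply, map_sub] using h
  -- the column of W₁₂
  set b : Fin n → ℂ := fun i => W₁₂ i 0 with hbdef
  set u : ℂ := x₂ - ((W₂₁ * W₁₁⁻¹) *ᵥ x₁) 0 with hudef
  have hsolve : ∀ w v : Fin n ⊕ Fin 1 → ℂ,
      fromBlocks W₁₁ W₁₂ W₂₁ W₂₂ *ᵥ v = w → (fromBlocks W₁₁ W₁₂ W₂₁ W₂₂)⁻¹ *ᵥ w = v := by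
    intro w v h
    rw [← h, mulVec_mulVec, Matrix.nonsing_inv_mul _ hMdet, one_mulVec]
  have hmv : ∀ (P : Matrix (Fin 1) (Fin n) ℂ), (P *ᵥ b) 0 = (P * W₁₂) 0 0 := by
    intro P
    simp [mulVec, dotProduct, mul_apply, hbdef]
  have hAAinv : ∀ v : Fin n → ℂ, W₁₁ *ᵥ (W₁₁⁻¹ *ᵥ v) = v := by
    intro v
    rw [mulVec_mulVec, Matrix.mul_nonsing_inv _ hAdet, one_mulVec]
  have hcolmul : ∀ c : ℂ, W₁₂ *ᵥ (fun _ => c) = c • b := by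
    intro c
    ext i
    simp [mulVec, dotProduct, hbdef, mul_comm]
  have hW22 : ∀ c : ℂ, W₂₂ *ᵥ (fun _ => c) = fun _ => W₂₂ 0 0 * c := by
    intro c
    ext j
    have : j = 0 := Subsingleton.elim _ _
    subst this
    simp [mulVec, dotProduct]
  have hs' : (W₂₁ * W₁₁⁻¹ * W₁₂) 0 0 = W₂₂ 0 0 - σ := by
    rw [hσdef]; simp
  -- M⁻¹ *ᵥ e
  have hIe : (fromBlocks W₁₁ W₁₂ W₂₁ W₂₂)⁻¹ *ᵥ Sum.elim (0 : Fin n → ℂ) (1 : Fin 1 → ℂ) =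
      Sum.elim (-(σ⁻¹ • (W₁₁⁻¹ *ᵥ b))) (fun _ => σ⁻¹) := by
    apply hsolve
    rw [fromBlocks_mulVec]
    simp only [Sum.elim_comp_inl, Sum.elim_comp_inr]
    have h1 : W₁₁ *ᵥ (-(σ⁻¹ • (W₁₁⁻¹ *ᵥ b))) + W₁₂ *ᵥ (fun _ => σ⁻¹) = 0 := by
      rw [mulVec_neg, mulVec_smul, hAAinv, hcolmul]
      simp
    have h2 : W₂₁ *ᵥ (-(σ⁻¹ • (W₁₁⁻¹ *ᵥ b))) + W₂₂ *ᵥ (fun _ => σ⁻¹) = (1 : Fin 1 → ℂ) := by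
      funext j
      have hj : j = 0 := Subsingleton.elim _ _
      subst hj
      rw [mulVec_neg, mulVec_smul, hW22, Matrix.mulVec_mulVec]
      simp only [Pi.add_apply, Pi.neg_apply, Pi.smul_apply, smul_eq_mul, Pi.one_apply]
      rw [hmv, hs']
      field_simp
      ring
    rw [h1, h2]
  -- M⁻¹ *ᵥ x
  have hIx : (fromBlocks W₁₁ W₁₂ W₂₁ W₂₂)⁻¹ *ᵥ Sum.elim x₁ (fun _ => x₂) =
      Sum.elim (W₁₁⁻¹ *ᵥ x₁ - (u * σ⁻¹) • (W₁₁⁻¹ *ᵥ b)) (fun _ => u * σ⁻¹) := by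
    apply hsolve
    rw [fromBlocks_mulVec]
    simp only [Sum.elim_comp_inl, Sum.elim_comp_inr]
    have h1 : W₁₁ *ᵥ (W₁₁⁻¹ *ᵥ x₁ - (u * σ⁻¹) • (W₁₁⁻¹ *ᵥ b)) + W₁₂ *ᵥ (fun _ => u * σ⁻¹) = x₁ := by
      rw [mulVec_sub, mulVec_smul, hAAinv, hAAinv, hcolmul]
      ext i
      simp [mul_comm]
    have h2 : W₂₁ *ᵥ (W₁₁⁻¹ *ᵥ x₁ - (u * σ⁻¹) • (W₁₁⁻¹ *ᵥ b)) + W₂₂ *ᵥ (fun _ => u * σ⁻¹) =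
        (fun _ => x₂) := by
      funext j
      have hj : j = 0 := Subsingleton.elim _ _
      subst hj
      rw [mulVec_sub, mulVec_smul, hW22, Matrix.mulVec_mulVec, Matrix.mulVec_mulVec]
      simp only [Pi.add_apply, Pi.sub_apply, Pi.smul_apply, smul_eq_mul]
      rw [hmv, hs']
      have hu' : ((W₂₁ * W₁₁⁻¹) *ᵥ x₁) 0 = x₂ - u := by rw [hudef]; ring
      rw [hu']
      field_simp
      ring
    rw [h1, h2]
  -- conjugation identity
  have hconj : star x₁ ⬝ᵥ (W₁₁⁻¹ *ᵥ b) = (starRingEnd ℂ) (((W₂₁ * W₁₁⁻¹) *ᵥ x₁) 0) := by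
    have h2 : (W₂₁ * W₁₁⁻¹)ᴴ = W₁₁⁻¹ * W₁₂ := by
      rw [conjTranspose_mul, hAinv.eq, ← hC, conjTranspose_conjTranspose]
    have h3 : ∀ j, (starRingEnd ℂ) ((W₂₁ * W₁₁⁻¹) 0 j) = (W₁₁⁻¹ * W₁₂) j 0 := by
      intro j
      rw [← h2]
      simp [conjTranspose_apply]
    calc star x₁ ⬝ᵥ (W₁₁⁻¹ *ᵥ b)
        = ∑ j, (starRingEnd ℂ) (x₁ j) * (W₁₁⁻¹ * W₁₂) j 0 := by
          simp [dotProduct, mulVec, mul_apply, hbdef]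
      _ = ∑ j, (starRingEnd ℂ) ((W₂₁ * W₁₁⁻¹) 0 j * x₁ j) := by
          refine Finset.sum_congr rfl fun j _ => ?_
          rw [_root_.map_mul, h3 j]
          ring
      _ = (starRingEnd ℂ) (((W₂₁ * W₁₁⁻¹) *ᵥ x₁) 0) := by
          rw [← map_sum]
          congr 1
  have hconju : star x₁ ⬝ᵥ (W₁₁⁻¹ *ᵥ b) = (starRingEnd ℂ) x₂ - (starRingEnd ℂ) u := by
    rw [hconj, hudef, map_sub]
    ring
  set q : ℂ := star x₁ ⬝ᵥ (W₁₁⁻¹ *ᵥ x₁) with hqdef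
  have hu2 : ((‖u‖ ^ 2 : ℝ) : ℂ) = u * (starRingEnd ℂ) u := by
    rw [Complex.mul_conj, Complex.normSq_eq_norm_sq]
  -- numerator and denominator of s₂
  have hnume : star (Sum.elim x₁ fun _ : Fin 1 => x₂) ⬝ᵥ
      (Sum.elim (-(σ⁻¹ • (W₁₁⁻¹ *ᵥ b))) (fun _ : Fin 1 => σ⁻¹)) = σ⁻¹ * (starRingEnd ℂ) u := by
    rw [Function.star_sumElim, sumElim_dotProduct_sumElim]
    have h1 : star x₁ ⬝ᵥ (-(σ⁻¹ • (W₁₁⁻¹ *ᵥ b))) =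
        -(σ⁻¹ * ((starRingEnd ℂ) x₂ - (starRingEnd ℂ) u)) := by
      rw [dotProduct_neg, dotProduct_smul, hconju, smul_eq_mul]
    have h2 : (star fun _ : Fin 1 => x₂) ⬝ᵥ (fun _ => σ⁻¹) = (starRingEnd ℂ) x₂ * σ⁻¹ := by
      simp [dotProduct]
    rw [h1, h2]
    ring
  have hdene : star (Sum.elim (0 : Fin n → ℂ) (1 : Fin 1 → ℂ)) ⬝ᵥ
      (Sum.elim (-(σ⁻¹ • (W₁₁⁻¹ *ᵥ b))) (fun _ : Fin 1 => σ⁻¹)) = σ⁻¹ := by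
    rw [Function.star_sumElim, sumElim_dotProduct_sumElim]
    simp [dotProduct]
  -- compute s₁
  have hs₁' : s₁ = q + ((‖u‖ ^ 2 : ℝ) : ℂ) * σ⁻¹ := by
    rw [hs₁, hIx, Function.star_sumElim, sumElim_dotProduct_sumElim]
    have h1 : star x₁ ⬝ᵥ (W₁₁⁻¹ *ᵥ x₁ - (u * σ⁻¹) • (W₁₁⁻¹ *ᵥ b)) =
        q - (u * σ⁻¹) * ((starRingEnd ℂ) x₂ - (starRingEnd ℂ) u) := by
      rw [dotProduct_sub, dotProduct_smul, hconju, smul_eq_mul, hqdef]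
    have h2 : (star fun _ : Fin 1 => x₂) ⬝ᵥ (fun _ => u * σ⁻¹) =
        (starRingEnd ℂ) x₂ * (u * σ⁻¹) := by
      simp [dotProduct]
    rw [h1, h2, hu2]
    ring
  -- compute s₂
  have hs₂' : s₂ = ((‖u‖ ^ 2 : ℝ) : ℂ) * σ⁻¹ := by
    rw [hs₂, hIe, hnume, hdene]
    have hnorm : (‖σ⁻¹ * (starRingEnd ℂ) u‖ ^ 2 : ℝ) = ‖σ⁻¹‖ ^ 2 * ‖u‖ ^ 2 := by
      rw [norm_mul, mul_pow, RCLike.norm_conj]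
    have hσ2 : ((‖σ⁻¹‖ ^ 2 : ℝ) : ℂ) = σ⁻¹ * σ⁻¹ := by
      have h := Complex.mul_conj σ⁻¹
      rw [map_inv₀, hσc, Complex.normSq_eq_norm_sq] at h
      exact h.symm
    rw [hnorm]
    push_cast [hσ2, hu2]
    field_simp
  -- finish
  rw [hs₁', hs₂']
  have hden : (κ : ℂ) + (q + ((‖u‖ ^ 2 : ℝ) : ℂ) * σ⁻¹) - ((‖u‖ ^ 2 : ℝ) : ℂ) * σ⁻¹ =
      (κ : ℂ) + q := by ring
  rw [hden, ← div_eq_mul_inv, div_div]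
end
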